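/- In the β-discounted model (UD): if J* ≥ 0, then J* is the unique fixed point of T within the set of functions { J : S → [-∞,+∞] | -b ≤ J ≤ J* + b for some scalar b ≥ 0 }; that is, if J = T(J) and -b ≤ J ≤ J* + b for some b ≥ 0, then J = J*. -/

import Mathlib

/-!
Common framework: countable-state/countable-control total-cost MDPs under the
General Convergence (GC) condition, following H. Yu, "On Convergence of Value
Iteration for a Class of Total Cost Markov Decision Processes".

States `S` and controls `C` are countable types; `U x` is the nonempty set of
feasible controls at `x`; `g x u ∈ (-∞, +∞]` is the one-stage cost (an `EReal`
that is never `⊥` on feasible pairs); `q x u x'` are transition probabilities.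

A policy is represented by its conditional control distributions given the
(reversed) history of past (state, control) pairs and the current state.
Expectations are computed by explicit countable sums, splitting every
extended-real quantity into its positive and negative parts (computed in
`ℝ≥0∞`) and recombining with the convention `∞ - ∞ = ∞`.
-/

open scoped ENNReal Classical
open Filter

noncomputable section

namespace GCMDP

/-- The positive part of an extended real, as an element of `ℝ≥0∞`. -/
def ePos (a : EReal) : ℝ≥0∞ := if a = ⊤ then ⊤ else ENNReal.ofReal a.toReal

/-- Recombine a positive part `P` and a negative part `N` into an extended real,
with the convention `∞ - ∞ = ∞`. -/
def signedSum (P N : ℝ≥0∞) : EReal := if P = ⊤ then ⊤ else (P : EReal) - (N : EReal)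

variable {S C : Type}

/-- A (randomized, history-dependent) policy: to each reversed list of past
(state, control) pairs and each current state it assigns a mass function on
controls. -/
def Policy (S C : Type) : Type := List (S × C) → S → C → ℝ≥0∞

/-- A policy is valid for the control constraint `U` if each of its conditional
distributions is a probability distribution concentrated on the feasible set. -/
def IsPolicy (U : S → Set C) (π : Policy S C) : Prop :=
  ∀ (h : List (S × C)) (x : S), (∑' u : C, π h x u) = 1 ∧ ∀ u : C, π h x u ≠ 0 → u ∈ U x

/-- A policy is nonrandomized if each of its conditional distributions is a
point mass. -/
def Nonrandomized (π : Policy S C) : Prop :=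
  ∀ (h : List (S × C)) (x : S), ∃ u : C, ∀ u' : C, π h x u' = if u' = u then 1 else 0

/-- The initial state recorded in a reversed history `h` with current state `x`. -/
def initOf (h : List (S × C)) (x : S) : S := ((h.getLast?).map Prod.fst).getD x

/-- A policy is semi-Markov if its decision at time `k` depends on the history
only through the time `k`, the initial state and the current state. -/
def IsSemiMarkov (π : Policy S C) : Prop :=
  ∀ (h h' : List (S × C)) (x : S), h.length = h'.length → initOf h x = initOf h' x →
    π h x = π h' x

/-- A policy is Markov if its decision at time `k` depends on the history only
through the time `k` and the current state. -/
def IsMarkov (π : Policy S C) : Prop :=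
  ∀ (h h' : List (S × C)) (x : S), h.length = h'.length → π h x = π h' x

/-- A policy is stationary if its decision depends only on the current state. -/
def IsStationary (π : Policy S C) : Prop :=
  ∀ (h h' : List (S × C)) (x : S), π h x = π h' x

/-- The stationary policy determined by a one-step decision rule `μ`. -/
def toPolicy (μ : S → C → ℝ≥0∞) : Policy S C := fun _ x u => μ x u

/-- Probability that, starting from `x₀` and following policy `π`, the first
transitions produce the reversed history `h` and current state `y`. -/
def histProb (q : S → C → S → ℝ≥0∞) (π : Policy S C) (x₀ : S) :
    List (S × C) → S → ℝ≥0∞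
  | [], y => if y = x₀ then 1 else 0
  | (z, u) :: h, y => histProb q π x₀ h z * π h z u * q z u y

/-- Marginal distribution of the state `x_n` at time `n` under policy `π`
started at `x₀`. -/
def sDist (q : S → C → S → ℝ≥0∞) (π : Policy S C) (x₀ : S) (n : ℕ) (y : S) : ℝ≥0∞ :=
  ∑' h : {l : List (S × C) // l.length = n}, histProb q π x₀ h.1 y

/-- Joint distribution of the state-control pair `(x_n, u_n)` at time `n`. -/
def saDist (q : S → C → S → ℝ≥0∞) (π : Policy S C) (x₀ : S) (n : ℕ) (y : S) (u : C) : ℝ≥0∞ :=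
  ∑' h : {l : List (S × C) // l.length = n}, histProb q π x₀ h.1 y * π h.1 y u

/-- Expectation `E^π_{x₀}[f(x_n, u_n)]` of a nonnegative cost. -/
def costAt (q : S → C → S → ℝ≥0∞) (π : Policy S C) (x₀ : S) (n : ℕ)
    (f : S → C → ℝ≥0∞) : ℝ≥0∞ :=
  ∑' y : S, ∑' u : C, saDist q π x₀ n y u * f y u

/-- Positive part `g₊` of the one-stage cost. -/
def gPos (g : S → C → EReal) (x : S) (u : C) : ℝ≥0∞ := ePos (g x u)

/-- Negative part `g₋` of the one-stage cost. -/
def gNeg (g : S → C → EReal) (x : S) (u : C) : ℝ≥0∞ := ePos (-(g x u))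

/-- `J_π^+(x) = E^π_x[∑_k g₊(x_k,u_k)]`. -/
def Jplus (q : S → C → S → ℝ≥0∞) (g : S → C → EReal) (π : Policy S C) (x : S) : ℝ≥0∞ :=
  ∑' n : ℕ, costAt q π x n (gPos g)

/-- `J_π^-(x) = E^π_x[∑_k g₋(x_k,u_k)]`. -/
def Jminus (q : S → C → S → ℝ≥0∞) (g : S → C → EReal) (π : Policy S C) (x : S) : ℝ≥0∞ :=
  ∑' n : ℕ, costAt q π x n (gNeg g)

/-- The total cost `J_π(x) = J_π^+(x) - J_π^-(x)` of a policy. -/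
def Jpol (q : S → C → S → ℝ≥0∞) (g : S → C → EReal) (π : Policy S C) (x : S) : EReal :=
  signedSum (Jplus q g π x) (Jminus q g π x)

/-- The general convergence (GC) condition: `sup_π J_π^-(x) < ∞` for all `x`. -/
def GC (U : S → Set C) (q : S → C → S → ℝ≥0∞) (g : S → C → EReal) : Prop :=
  ∀ x : S, (⨆ π ∈ {π' : Policy S C | IsPolicy U π'}, Jminus q g π x) ≠ ⊤

/-- The optimal cost function `J*(x) = inf_π J_π(x)`. -/
def Jstar (U : S → Set C) (q : S → C → S → ℝ≥0∞) (g : S → C → EReal) (x : S) : EReal :=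
  ⨅ π ∈ {π' : Policy S C | IsPolicy U π'}, Jpol q g π x

/-- `J^{*+}(x) = inf_π J_π^+(x)`. -/
def JstarPlus (U : S → Set C) (q : S → C → S → ℝ≥0∞) (g : S → C → EReal) (x : S) : ℝ≥0∞ :=
  ⨅ π ∈ {π' : Policy S C | IsPolicy U π'}, Jplus q g π x

/-- `J^{*-}(x) = inf_π J_π^-(x)`. -/
def JstarMinus (U : S → Set C) (q : S → C → S → ℝ≥0∞) (g : S → C → EReal) (x : S) : ℝ≥0∞ :=
  ⨅ π ∈ {π' : Policy S C | IsPolicy U π'}, Jminus q g π x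

/-- The general one-stage dynamic programming operator with one-stage cost `c`:
`(opT c J)(x) = inf_{u ∈ U(x)} { c(x,u) + ∑_{x'} J(x') q(x'|x,u) }`, where the
bracket is evaluated by separating positive and negative parts, with the
convention `∞ - ∞ = ∞`. -/
def opT (U : S → Set C) (q : S → C → S → ℝ≥0∞) (c : S → C → EReal)
    (J : S → EReal) (x : S) : EReal :=
  ⨅ u ∈ U x,
    signedSum (ePos (c x u) + ∑' x' : S, q x u x' * ePos (J x'))
      (ePos (-(c x u)) + ∑' x' : S, q x u x' * ePos (-(J x')))

/-- The dynamic programming operator `T` of the total cost problem. -/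
def Top (U : S → Set C) (q : S → C → S → ℝ≥0∞) (g : S → C → EReal) :
    (S → EReal) → S → EReal :=
  opT U q g

/-- The operator `T₊` associated with the positive part `g₊` of the cost. -/
def TopPlus (U : S → Set C) (q : S → C → S → ℝ≥0∞) (g : S → C → EReal) :
    (S → EReal) → S → EReal :=
  opT U q (fun x u => max (g x u) 0)

/-- The operator `T₋` associated with the (negated) negative part `-g₋` of the cost. -/
def TopMinus (U : S → Set C) (q : S → C → S → ℝ≥0∞) (g : S → C → EReal) :
    (S → EReal) → S → EReal :=
  opT U q (fun x u => min (g x u) 0)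

/-- The cost-free operator `T₀`. -/
def TopZero (U : S → Set C) (q : S → C → S → ℝ≥0∞) :
    (S → EReal) → S → EReal :=
  opT U q (fun _ _ => 0)

/-- The monotone-increasing modification `T̃(J) = max{J, T(J)}` of `T`. -/
def Ttil (U : S → Set C) (q : S → C → S → ℝ≥0∞) (g : S → C → EReal)
    (J : S → EReal) (x : S) : EReal :=
  max (J x) (Top U q g J x)

/-- The operator `T_μ` associated with a stationary decision rule `μ`. -/
def Tmu (q : S → C → S → ℝ≥0∞) (g : S → C → EReal) (μ : S → C → ℝ≥0∞)
    (J : S → EReal) (x : S) : EReal :=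
  signedSum (∑' u : C, μ x u * (ePos (g x u) + ∑' x' : S, q x u x' * ePos (J x')))
    (∑' u : C, μ x u * (ePos (-(g x u)) + ∑' x' : S, q x u x' * ePos (-(J x'))))

/-- Expectation `E^π_{x₀}[J(x_n)]` of an extended-real function of the state at
time `n` (positive and negative parts combined with the convention `∞-∞=∞`). -/
def expState (q : S → C → S → ℝ≥0∞) (π : Policy S C) (x₀ : S) (n : ℕ)
    (J : S → EReal) : EReal :=
  signedSum (∑' y : S, sDist q π x₀ n y * ePos (J y))
    (∑' y : S, sDist q π x₀ n y * ePos (-(J y)))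

/-- The expected tail cost `E^π_{x₀}[∑_{k ≥ n} g(x_k, u_k)]`. -/
def tailCost (q : S → C → S → ℝ≥0∞) (g : S → C → EReal) (π : Policy S C)
    (x₀ : S) (n : ℕ) : EReal :=
  signedSum (∑' k : ℕ, costAt q π x₀ (n + k) (gPos g))
    (∑' k : ℕ, costAt q π x₀ (n + k) (gNeg g))

/-- Membership in the class `A₀(S)`: functions nowhere `-∞` such that
`inf_{n ≥ 1} T₀ⁿ(min{J, 0})` is nowhere `-∞`. -/
def MemA0 (U : S → Set C) (q : S → C → S → ℝ≥0∞) (J : S → EReal) : Prop :=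
  (∀ x : S, J x ≠ ⊥) ∧
    ∀ x : S, (⨅ n : ℕ, (TopZero U q)^[n + 1] (fun y => min (J y) 0) x) ≠ ⊥


/-! ### The β-discounted model (UD) -/

/-- Discounted `J_π^+(x) = E^π_x[∑_k β^k g₊(x_k,u_k)]`. -/
def JplusD (β : ℝ) (q : S → C → S → ℝ≥0∞) (g : S → C → EReal) (π : Policy S C) (x : S) : ℝ≥0∞ :=
  ∑' n : ℕ, ENNReal.ofReal β ^ n * costAt q π x n (gPos g)

/-- Discounted `J_π^-(x) = E^π_x[∑_k β^k g₋(x_k,u_k)]`. -/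
def JminusD (β : ℝ) (q : S → C → S → ℝ≥0∞) (g : S → C → EReal) (π : Policy S C) (x : S) : ℝ≥0∞ :=
  ∑' n : ℕ, ENNReal.ofReal β ^ n * costAt q π x n (gNeg g)

/-- The discounted total cost of a policy. -/
def JpolD (β : ℝ) (q : S → C → S → ℝ≥0∞) (g : S → C → EReal) (π : Policy S C) (x : S) : EReal :=
  signedSum (JplusD β q g π x) (JminusD β q g π x)

/-- The (GC) condition for the discounted model. -/
def GCD (β : ℝ) (U : S → Set C) (q : S → C → S → ℝ≥0∞) (g : S → C → EReal) : Prop :=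
  ∀ x : S, (⨆ π ∈ {π' : Policy S C | IsPolicy U π'}, JminusD β q g π x) ≠ ⊤

/-- The discounted optimal cost function. -/
def JstarD (β : ℝ) (U : S → Set C) (q : S → C → S → ℝ≥0∞) (g : S → C → EReal) (x : S) : EReal :=
  ⨅ π ∈ {π' : Policy S C | IsPolicy U π'}, JpolD β q g π x

/-- Discounted `J^{*+}`. -/
def JstarPlusD (β : ℝ) (U : S → Set C) (q : S → C → S → ℝ≥0∞) (g : S → C → EReal) (x : S) : ℝ≥0∞ :=
  ⨅ π ∈ {π' : Policy S C | IsPolicy U π'}, JplusD β q g π x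

/-- Discounted `J^{*-}`. -/
def JstarMinusD (β : ℝ) (U : S → Set C) (q : S → C → S → ℝ≥0∞) (g : S → C → EReal) (x : S) : ℝ≥0∞ :=
  ⨅ π ∈ {π' : Policy S C | IsPolicy U π'}, JminusD β q g π x

/-- The discounted dynamic programming operator
`T(J)(x) = inf_{u ∈ U(x)} { g(x,u) + β ∑_{x'} J(x') q(x'|x,u) }`, with the
convention `∞ - ∞ = ∞`. -/
def TopD (β : ℝ) (U : S → Set C) (q : S → C → S → ℝ≥0∞) (g : S → C → EReal)
    (J : S → EReal) (x : S) : EReal :=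
  ⨅ u ∈ U x,
    signedSum (ePos (g x u) + ENNReal.ofReal β * ∑' x' : S, q x u x' * ePos (J x'))
      (ePos (-(g x u)) + ENNReal.ofReal β * ∑' x' : S, q x u x' * ePos (-(J x')))


/-! ### Auxiliary toolbox -/

section Toolbox

lemma ePos_top : ePos (⊤ : EReal) = ⊤ := by simp [ePos]

lemma ePos_bot : ePos (⊥ : EReal) = 0 := by simp [ePos]

lemma ePos_real (r : ℝ) : ePos (r : EReal) = ENNReal.ofReal r := by
  simp [ePos]

lemma ePos_eq_top_iff {a : EReal} : ePos a = ⊤ ↔ a = ⊤ := by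
  rcases eq_or_ne a ⊤ with h | h
  · simp [h, ePos]
  · simp [ePos, h, ENNReal.ofReal_ne_top]

lemma ePos_mono {a b : EReal} (h : a ≤ b) : ePos a ≤ ePos b := by
  rcases eq_or_ne b ⊤ with hb | hb
  · simp [hb, ePos]
  · have ha : a ≠ ⊤ := fun haa => hb (top_le_iff.1 (haa ▸ h))
    rcases eq_or_ne a ⊥ with hab | hab
    · simp [hab, ePos, hb, ha]
    · simp only [ePos, ha, hb, if_false]
      exact ENNReal.ofReal_le_ofReal (EReal.toReal_le_toReal h hab hb)

lemma ePos_nonpos {a : EReal} (h : a ≤ 0) : ePos a = 0 := by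
  have h2 := ePos_mono h
  have h0 : ePos ((0 : ℝ) : EReal) = 0 := by
    rw [ePos_real, ENNReal.ofReal_zero]
  rw [show ((0:ℝ) : EReal) = (0 : EReal) by norm_cast] at h0
  rw [h0] at h2
  exact le_antisymm h2 (zero_le)

lemma ePos_coe_ennreal (P : ℝ≥0∞) : ePos (P : EReal) = P := by
  rcases eq_or_ne P ⊤ with h | h
  · simp [h, ePos, EReal.coe_ennreal_top]
  · have h1 : (P : EReal) ≠ ⊤ := by simpa [EReal.coe_ennreal_eq_top_iff] using h
    simp [ePos, h1, EReal.toReal_coe_ennreal, ENNReal.ofReal_toReal h]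

lemma coe_ennreal_real {P : ℝ≥0∞} (h : P ≠ ⊤) : (P : EReal) = ((P.toReal : ℝ) : EReal) := by
  rw [← EReal.coe_toReal (x := (P : EReal)) (by simpa [EReal.coe_ennreal_eq_top_iff])
    (EReal.coe_ennreal_ne_bot _), EReal.toReal_coe_ennreal]

lemma signedSum_of_ne_top {P N : ℝ≥0∞} (hN : N ≠ ⊤) :
    signedSum P N = (P : EReal) - (N : EReal) := by
  rcases eq_or_ne P ⊤ with h | h
  · rw [signedSum, if_pos h, h, EReal.coe_ennreal_top, coe_ennreal_real hN]
    rfl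
  · rw [signedSum, if_neg h]

lemma ePos_neg_real (r : ℝ) : ePos (-(r : EReal)) = ENNReal.ofReal (-r) := by
  rw [← EReal.coe_neg, ePos_real]

lemma ofReal_max_self (r : ℝ) : ENNReal.ofReal r = ENNReal.ofReal (max r 0) := by
  rcases le_total 0 r with h | h
  · rw [max_eq_left h]
  · rw [max_eq_right h, ENNReal.ofReal_of_nonpos h, ENNReal.ofReal_zero]

private lemma real_core1 (A C e r : ℝ) :
    A - C ≤ r + e ↔ A + max (-r) 0 ≤ max r 0 + C + e := by
  rcases le_total 0 r with h | h
  · rw [max_eq_left h, max_eq_right (neg_nonpos.mpr h)]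
    constructor <;> intro <;> linarith
  · rw [max_eq_right h, max_eq_left (neg_nonneg.mpr h)]
    constructor <;> intro <;> linarith

private lemma real_core2 (A C r : ℝ) :
    r ≤ A - C ↔ max r 0 + C ≤ A + max (-r) 0 := by
  rcases le_total 0 r with h | h
  · rw [max_eq_left h, max_eq_right (neg_nonpos.mpr h)]
    constructor <;> intro <;> linarith
  · rw [max_eq_right h, max_eq_left (neg_nonneg.mpr h)]
    constructor <;> intro <;> linarith

/-- Master conversion lemma (form 1): `A - C ≤ a + e` versus `ℝ≥0∞` arithmetic. -/
lemma key1 {A C e : ℝ≥0∞} (hC : C ≠ ⊤) (he : e ≠ ⊤) {a : EReal} (ha : a ≠ ⊥) :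
    (A : EReal) - (C : EReal) ≤ a + (e : EReal) ↔ A + ePos (-a) ≤ ePos a + C + e := by
  induction a with
  | bot => exact absurd rfl ha
  | top =>
      have h1 : (⊤ : EReal) + (e : EReal) = ⊤ :=
        EReal.top_add_of_ne_bot (EReal.coe_ennreal_ne_bot e)
      have h2 : ePos (-(⊤ : EReal)) = 0 := by rw [EReal.neg_top]; exact ePos_bot
      simp [h1, ePos_top, h2, le_top]
  | coe r =>
      have hreC : (C : EReal) = ((C.toReal : ℝ) : EReal) := coe_ennreal_real hC
      have hree : (e : EReal) = ((e.toReal : ℝ) : EReal) := coe_ennreal_real he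
      rcases eq_or_ne A ⊤ with hAt | hAt
      · subst hAt
        constructor
        · intro h
          exfalso
          rw [EReal.coe_ennreal_top, hreC, hree] at h
          have h2 : ((⊤ : EReal) - ((C.toReal : ℝ) : EReal)) = ⊤ :=
            EReal.top_sub_coe _
          rw [h2, top_le_iff, ← EReal.coe_add] at h
          exact EReal.coe_ne_top _ h
        · intro h
          exfalso
          have h3 : (⊤ : ℝ≥0∞) ≤ ePos ((r : ℝ) : EReal) + C + e := le_trans (by simp) h
          rw [top_le_iff, ePos_real] at h3
          exact (by simp [ENNReal.add_eq_top, hC, he, ENNReal.ofReal_ne_top] : 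
            ENNReal.ofReal r + C + e ≠ ⊤) h3
      · have hreA : (A : EReal) = ((A.toReal : ℝ) : EReal) := coe_ennreal_real hAt
        have hofr : ENNReal.ofReal r ≠ ⊤ := ENNReal.ofReal_ne_top
        have hofnr : ENNReal.ofReal (-r) ≠ ⊤ := ENNReal.ofReal_ne_top
        rw [hreA, hreC, hree, ePos_real, ePos_neg_real, ← EReal.coe_sub, ← EReal.coe_add,
          EReal.coe_le_coe_iff,
          ← ENNReal.toReal_le_toReal (by simp [ENNReal.add_eq_top, hAt, hofnr])
            (by simp [ENNReal.add_eq_top, hC, he, hofr]),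
          ENNReal.toReal_add hAt hofnr,
          ENNReal.toReal_add (by simp [ENNReal.add_eq_top, hC, hofr]) he,
          ENNReal.toReal_add hofr hC, ENNReal.toReal_ofReal', ENNReal.toReal_ofReal']
        exact real_core1 _ _ _ _

/-- Master conversion lemma (form 2): `L ≤ A - C` versus `ℝ≥0∞` arithmetic. -/
lemma key2 {A C : ℝ≥0∞} (hC : C ≠ ⊤) (L : EReal) :
    L ≤ (A : EReal) - (C : EReal) ↔ ePos L + C ≤ A + ePos (-L) := by
  have hreC : (C : EReal) = ((C.toReal : ℝ) : EReal) := coe_ennreal_real hC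
  induction L with
  | bot =>
      have h2 : ePos (-(⊥ : EReal)) = ⊤ := by rw [EReal.neg_bot]; exact ePos_top
      rw [h2, ePos_bot]
      simp
  | top =>
      have h2 : ePos (-(⊤ : EReal)) = 0 := by rw [EReal.neg_top]; exact ePos_bot
      rw [ePos_top, h2, add_zero]
      constructor
      · intro h
        rcases eq_or_ne A ⊤ with hAt | hAt
        · simp [hAt]
        · exfalso
          rw [coe_ennreal_real hAt, hreC, ← EReal.coe_sub, top_le_iff] at h
          exact EReal.coe_ne_top _ h
      · intro h
        rw [top_le_iff.1 (le_trans le_top h), EReal.coe_ennreal_top, hreC,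
          EReal.top_sub_coe]
  | coe r =>
      rcases eq_or_ne A ⊤ with hAt | hAt
      · subst hAt
        have h2 : ((⊤ : EReal) - ((C.toReal : ℝ) : EReal)) = ⊤ := by
          rw [EReal.top_sub_coe]
        rw [EReal.coe_ennreal_top, hreC, h2]
        simp only [le_top, true_iff]
        exact le_trans (le_top) (by simp)
      · have hreA : (A : EReal) = ((A.toReal : ℝ) : EReal) := coe_ennreal_real hAt
        have hofr : ENNReal.ofReal r ≠ ⊤ := ENNReal.ofReal_ne_top
        have hofnr : ENNReal.ofReal (-r) ≠ ⊤ := ENNReal.ofReal_ne_top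
        rw [hreA, hreC, ePos_real, ePos_neg_real, ← EReal.coe_sub, EReal.coe_le_coe_iff,
          ← ENNReal.toReal_le_toReal (by simp [ENNReal.add_eq_top, hC, hofr])
            (by simp [ENNReal.add_eq_top, hAt, hofnr]),
          ENNReal.toReal_add hofr hC, ENNReal.toReal_add hAt hofnr,
          ENNReal.toReal_ofReal', ENNReal.toReal_ofReal']
        exact real_core2 _ _ _

lemma ennreal_sub_le_sub {A B C D : ℝ≥0∞} (h : B + C ≤ A + D) (hC : C ≠ ⊤) (hD : D ≠ ⊤) :
    (B : EReal) - (D : EReal) ≤ (A : EReal) - (C : EReal) := by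
  rcases eq_or_ne A ⊤ with hA | hA
  · rw [hA, EReal.coe_ennreal_top, coe_ennreal_real hC, EReal.top_sub_coe]
    exact le_top
  · have hB : B ≠ ⊤ := by
      intro hB
      rw [hB, top_add, top_le_iff, ENNReal.add_eq_top] at h
      tauto
    have h' : B.toReal + C.toReal ≤ A.toReal + D.toReal := by
      rw [← ENNReal.toReal_add hB hC, ← ENNReal.toReal_add hA hD]
      exact (ENNReal.toReal_le_toReal (by simp [ENNReal.add_eq_top, hB, hC])
        (by simp [ENNReal.add_eq_top, hA, hD])).2 h
    rw [coe_ennreal_real hA, coe_ennreal_real hB, coe_ennreal_real hC, coe_ennreal_real hD,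
      ← EReal.coe_sub, ← EReal.coe_sub, EReal.coe_le_coe_iff]
    linarith

lemma ereal_le_of_forall_pos {X Y : EReal} (hY : Y ≠ ⊥)
    (h : ∀ δ : ℝ, 0 < δ → X ≤ Y + (δ : EReal)) : X ≤ Y := by
  induction Y with
  | bot => exact absurd rfl hY
  | top => exact le_top
  | coe y =>
      induction X with
      | bot => exact bot_le
      | top =>
          exfalso
          have := h 1 one_pos
          rw [← EReal.coe_add, top_le_iff] at this
          exact EReal.coe_ne_top _ this
      | coe x =>
          rw [EReal.coe_le_coe_iff]
          by_contra hxy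
          push_neg at hxy
          have := h ((x - y) / 2) (by linarith)
          rw [← EReal.coe_add, EReal.coe_le_coe_iff] at this
          linarith

lemma ereal_add_sub_cancel (x : EReal) (d : ℝ) : x + (d : EReal) - (d : EReal) = x :=
  EReal.add_sub_cancel_right

lemma ereal_iInf_add {ι : Sort*} [Nonempty ι] (f : ι → EReal) (d : ℝ) :
    ⨅ i, (f i + (d : EReal)) = (⨅ i, f i) + (d : EReal) := by
  refine le_antisymm ?_ (le_iInf fun i => add_le_add_left (iInf_le _ i) _)
  have h1 : (⨅ i, (f i + (d : EReal))) - (d : EReal) ≤ ⨅ i, f i := by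
    refine le_iInf fun i => ?_
    refine le_trans (EReal.sub_le_sub (iInf_le _ i) (le_refl _)) ?_
    rw [ereal_add_sub_cancel]
  calc ⨅ i, (f i + (d : EReal)) = (⨅ i, (f i + (d : EReal))) - d + d := by
        rw [EReal.sub_add_cancel]
    _ ≤ (⨅ i, f i) + d := add_le_add_left h1 _

end Toolbox





/-! ### History and policy machinery -/

section Machinery

variable {S C : Type}

lemma tsum_ind {α : Type} (x₀ : α) (f : α → ℝ≥0∞) :
    ∑' z, (if z = x₀ then 1 else 0) * f z = f x₀ := by
  rw [tsum_congr (fun z => show (if z = x₀ then 1 else 0) * f z = if z = x₀ then f x₀ else 0 by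
    split <;> simp_all)]
  exact tsum_ite_eq x₀ (fun _ => f x₀)

lemma initOf_nil (x : S) : initOf ([] : List (S × C)) x = x := rfl

lemma initOf_cons (z : S) (u : C) (h : List (S × C)) (y : S) :
    initOf ((z, u) :: h) y = initOf h z := by
  cases h with
  | nil => rfl
  | cons p t =>
      obtain ⟨a, ha⟩ : ∃ a, (p :: t).getLast? = some a :=
        Option.isSome_iff_exists.mp (List.getLast?_isSome.mpr (by simp))
      simp [initOf, List.getLast?_cons_cons, ha]

lemma histProb_init {q : S → C → S → ℝ≥0∞} {π : Policy S C} {a : S} {h : List (S × C)} {y : S}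
    (h0 : histProb q π a h y ≠ 0) : initOf h y = a := by
  induction h generalizing y with
  | nil =>
      rw [initOf_nil]
      by_contra hya
      rw [histProb, if_neg hya] at h0
      exact h0 rfl
  | cons p t ih =>
      obtain ⟨z, u⟩ := p
      rw [initOf_cons]
      rw [histProb] at h0
      exact ih (fun hz => h0 (by rw [hz]; ring))

/-- The policy obtained by conditioning on a first (state, control) pair. -/
def shiftPol (π : Policy S C) (p : S × C) : Policy S C := fun h x u => π (h ++ [p]) x u

lemma isPolicy_shiftPol {U : S → Set C} {π : Policy S C} (hπ : IsPolicy U π) (p : S × C) :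
    IsPolicy U (shiftPol π p) := fun h x => hπ (h ++ [p]) x

lemma histProb_snoc (q : S → C → S → ℝ≥0∞) (π : Policy S C) (x₀ z : S) (u₀ : C)
    (h : List (S × C)) (y : S) :
    histProb q π x₀ (h ++ [(z, u₀)]) y =
      (if z = x₀ then 1 else 0) * π [] z u₀ * q z u₀ (initOf h y) *
        histProb q (shiftPol π (z, u₀)) (initOf h y) h y := by
  induction h generalizing y with
  | nil =>
      show histProb q π x₀ ((z, u₀) :: []) y = _
      simp [histProb, initOf_nil]
  | cons p t ih =>
      obtain ⟨a, u⟩ := p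
      show histProb q π x₀ ((a, u) :: (t ++ [(z, u₀)])) y = _
      rw [histProb, ih a, initOf_cons]
      rw [show histProb q (shiftPol π (z, u₀)) (initOf t a) ((a, u) :: t) y
        = histProb q (shiftPol π (z, u₀)) (initOf t a) t a * π (t ++ [(z, u₀)]) a u * q a u y
        from rfl]
      ring

/-- Reindexing histories of length `n+1` by (prefix, last step). -/
def snocEquiv (S C : Type) (n : ℕ) :
    ({l : List (S × C) // l.length = n} × (S × C)) ≃ {l : List (S × C) // l.length = n + 1} where
  toFun p := ⟨p.1.1 ++ [p.2], by simp [p.1.2]⟩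
  invFun l :=
    (⟨l.1.dropLast, by rw [List.length_dropLast, l.2]; rfl⟩,
      l.1.getLast (by
        intro hnil
        have h2 := l.2
        rw [hnil] at h2
        simp at h2))
  left_inv p := by
    ext : 1
    · exact Subtype.ext (by simp)
    · simp
  right_inv l := Subtype.ext (List.dropLast_append_getLast _)

lemma tsum_len_zero (F : {l : List (S × C) // l.length = 0} → ℝ≥0∞) :
    ∑' h, F h = F ⟨[], rfl⟩ :=
  tsum_eq_single _ (fun b' hb' => absurd (Subtype.ext (List.length_eq_zero_iff.mp b'.2)) hb')

lemma q_init_collapse (q : S → C → S → ℝ≥0∞) (σ : Policy S C) (w : S → ℝ≥0∞)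
    (h' : List (S × C)) (y : S) :
    (∑' x₁ : S, w x₁ * histProb q σ x₁ h' y)
      = w (initOf h' y) * histProb q σ (initOf h' y) h' y := by
  refine tsum_eq_single _ (fun x₁ hx₁ => ?_)
  rcases eq_or_ne (histProb q σ x₁ h' y) 0 with h0 | h0
  · rw [h0, mul_zero]
  · exact absurd (histProb_init h0).symm hx₁

/-- Master "first-step" peeling of a history sum. -/
lemma hist_peel (q : S → C → S → ℝ≥0∞) (π : Policy S C) (x₀ : S) (n : ℕ) (y : S)
    (Φ : Policy S C → List (S × C) → ℝ≥0∞)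
    (hΦ : ∀ (p : S × C) (h' : List (S × C)), Φ π (h' ++ [p]) = Φ (shiftPol π p) h') :
    (∑' h : {l : List (S × C) // l.length = n + 1}, histProb q π x₀ h.1 y * Φ π h.1)
      = ∑' u₀ : C, π [] x₀ u₀ * ∑' x₁ : S, q x₀ u₀ x₁ *
          ∑' h' : {l : List (S × C) // l.length = n},
            histProb q (shiftPol π (x₀, u₀)) x₁ h'.1 y * Φ (shiftPol π (x₀, u₀)) h'.1 := by
  have hW : ∀ z : S, ∀ u₀ : C,
      (∑' h' : {l : List (S × C) // l.length = n},
          histProb q π x₀ (h'.1 ++ [(z, u₀)]) y * Φ π (h'.1 ++ [(z, u₀)]))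
        = (if z = x₀ then 1 else 0) * (π [] z u₀ * ∑' x₁ : S, q z u₀ x₁ *
            ∑' h' : {l : List (S × C) // l.length = n},
              histProb q (shiftPol π (z, u₀)) x₁ h'.1 y * Φ (shiftPol π (z, u₀)) h'.1) := by
    intro z u₀
    calc (∑' h' : {l : List (S × C) // l.length = n},
            histProb q π x₀ (h'.1 ++ [(z, u₀)]) y * Φ π (h'.1 ++ [(z, u₀)]))
        = ∑' h' : {l : List (S × C) // l.length = n}, ∑' x₁ : S,
            (if z = x₀ then 1 else 0) * (π [] z u₀ * (q z u₀ x₁ *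
              (histProb q (shiftPol π (z, u₀)) x₁ h'.1 y * Φ (shiftPol π (z, u₀)) h'.1))) := by
          refine tsum_congr fun h' => ?_
          rw [histProb_snoc, hΦ,
            show (if z = x₀ then 1 else 0) * π [] z u₀ * q z u₀ (initOf h'.1 y) *
                histProb q (shiftPol π (z, u₀)) (initOf h'.1 y) h'.1 y *
                  Φ (shiftPol π (z, u₀)) h'.1
              = (if z = x₀ then 1 else 0) * π [] z u₀ *
                ((fun x₁ => q z u₀ x₁) (initOf h'.1 y) *
                  histProb q (shiftPol π (z, u₀)) (initOf h'.1 y) h'.1 y) *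
                    Φ (shiftPol π (z, u₀)) h'.1 by ring,
            ← q_init_collapse q (shiftPol π (z, u₀)) (fun x₁ => q z u₀ x₁) h'.1 y,
            ← ENNReal.tsum_mul_left, ← ENNReal.tsum_mul_right]
          exact tsum_congr fun x₁ => by ring
      _ = ∑' x₁ : S, ∑' h' : {l : List (S × C) // l.length = n},
            (if z = x₀ then 1 else 0) * (π [] z u₀ * (q z u₀ x₁ *
              (histProb q (shiftPol π (z, u₀)) x₁ h'.1 y * Φ (shiftPol π (z, u₀)) h'.1))) :=
          ENNReal.tsum_comm
      _ = (if z = x₀ then 1 else 0) * (π [] z u₀ * ∑' x₁ : S, q z u₀ x₁ *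
            ∑' h' : {l : List (S × C) // l.length = n},
              histProb q (shiftPol π (z, u₀)) x₁ h'.1 y * Φ (shiftPol π (z, u₀)) h'.1) := by
          rw [tsum_congr (fun x₁ => by
            rw [ENNReal.tsum_mul_left, ENNReal.tsum_mul_left, ENNReal.tsum_mul_left] :
            ∀ x₁ : S, (∑' h' : {l : List (S × C) // l.length = n},
              (if z = x₀ then 1 else 0) * (π [] z u₀ * (q z u₀ x₁ *
                (histProb q (shiftPol π (z, u₀)) x₁ h'.1 y * Φ (shiftPol π (z, u₀)) h'.1))))
              = (if z = x₀ then 1 else 0) * (π [] z u₀ * (q z u₀ x₁ *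
                  ∑' h' : {l : List (S × C) // l.length = n},
                    histProb q (shiftPol π (z, u₀)) x₁ h'.1 y * Φ (shiftPol π (z, u₀)) h'.1)))]
          rw [ENNReal.tsum_mul_left, ENNReal.tsum_mul_left]
  calc (∑' h : {l : List (S × C) // l.length = n + 1}, histProb q π x₀ h.1 y * Φ π h.1)
      = ∑' p : ({l : List (S × C) // l.length = n} × (S × C)),
          histProb q π x₀ (p.1.1 ++ [p.2]) y * Φ π (p.1.1 ++ [p.2]) := by
        rw [← Equiv.tsum_eq (snocEquiv S C n)
          (fun h => histProb q π x₀ h.1 y * Φ π h.1)]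
        rfl
    _ = ∑' h' : {l : List (S × C) // l.length = n}, ∑' z : S, ∑' u₀ : C,
          histProb q π x₀ (h'.1 ++ [(z, u₀)]) y * Φ π (h'.1 ++ [(z, u₀)]) := by
        rw [ENNReal.tsum_prod']
        exact tsum_congr fun h' => ENNReal.tsum_prod'
    _ = ∑' z : S, ∑' u₀ : C, ∑' h' : {l : List (S × C) // l.length = n},
          histProb q π x₀ (h'.1 ++ [(z, u₀)]) y * Φ π (h'.1 ++ [(z, u₀)]) := by
        rw [ENNReal.tsum_comm]
        exact tsum_congr fun z => ENNReal.tsum_comm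
    _ = ∑' z : S, (if z = x₀ then 1 else 0) * ∑' u₀ : C, (π [] z u₀ * ∑' x₁ : S, q z u₀ x₁ *
          ∑' h' : {l : List (S × C) // l.length = n},
            histProb q (shiftPol π (z, u₀)) x₁ h'.1 y * Φ (shiftPol π (z, u₀)) h'.1) := by
        refine tsum_congr fun z => ?_
        rw [← ENNReal.tsum_mul_left]
        exact tsum_congr fun u₀ => hW z u₀
    _ = ∑' u₀ : C, π [] x₀ u₀ * ∑' x₁ : S, q x₀ u₀ x₁ *
          ∑' h' : {l : List (S × C) // l.length = n},
            histProb q (shiftPol π (x₀, u₀)) x₁ h'.1 y * Φ (shiftPol π (x₀, u₀)) h'.1 :=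
        tsum_ind x₀ _

lemma saDist_zero (q : S → C → S → ℝ≥0∞) (π : Policy S C) (x₀ y : S) (u : C) :
    saDist q π x₀ 0 y u = (if y = x₀ then 1 else 0) * π [] y u := by
  rw [saDist, tsum_len_zero]; rfl

lemma sDist_zero (q : S → C → S → ℝ≥0∞) (π : Policy S C) (x₀ y : S) :
    sDist q π x₀ 0 y = if y = x₀ then 1 else 0 := by
  rw [sDist, tsum_len_zero]; rfl

lemma saDist_succ (q : S → C → S → ℝ≥0∞) (π : Policy S C) (x₀ : S) (n : ℕ) (y : S) (u : C) :
    saDist q π x₀ (n + 1) y u =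
      ∑' u₀ : C, π [] x₀ u₀ *
        ∑' x₁ : S, q x₀ u₀ x₁ * saDist q (shiftPol π (x₀, u₀)) x₁ n y u :=
  hist_peel q π x₀ n y (fun π' h => π' h y u) (fun p h' => rfl)

lemma sDist_succ (q : S → C → S → ℝ≥0∞) (π : Policy S C) (x₀ : S) (n : ℕ) (y : S) :
    sDist q π x₀ (n + 1) y =
      ∑' u₀ : C, π [] x₀ u₀ *
        ∑' x₁ : S, q x₀ u₀ x₁ * sDist q (shiftPol π (x₀, u₀)) x₁ n y := by
  have := hist_peel q π x₀ n y (fun _ _ => 1) (fun p h' => rfl)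
  simpa [sDist, mul_one] using this

end Machinery






/-! ### Cost recursions -/

section CostRec

variable {S C : Type}

lemma tsum_cycle {α β γ : Type} (f : α → β → γ → ℝ≥0∞) :
    ∑' a, ∑' b, ∑' c, f a b c = ∑' b, ∑' c, ∑' a, f a b c :=
  calc ∑' a, ∑' b, ∑' c, f a b c = ∑' b, ∑' a, ∑' c, f a b c := ENNReal.tsum_comm
    _ = ∑' b, ∑' c, ∑' a, f a b c := tsum_congr fun _ => ENNReal.tsum_comm

lemma tsum_swap_pairs {α β γ δ : Type} (f : α → β → γ → δ → ℝ≥0∞) :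
    ∑' a, ∑' b, ∑' c, ∑' d, f a b c d = ∑' c, ∑' d, ∑' a, ∑' b, f a b c d :=
  calc ∑' a, ∑' b, ∑' c, ∑' d, f a b c d
      = ∑' a, ∑' c, ∑' b, ∑' d, f a b c d := tsum_congr fun _ => ENNReal.tsum_comm
    _ = ∑' c, ∑' a, ∑' b, ∑' d, f a b c d := ENNReal.tsum_comm
    _ = ∑' c, ∑' a, ∑' d, ∑' b, f a b c d :=
        tsum_congr fun _ => tsum_congr fun _ => ENNReal.tsum_comm
    _ = ∑' c, ∑' d, ∑' a, ∑' b, f a b c d := tsum_congr fun _ => ENNReal.tsum_comm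

lemma pull2 {α β : Type} (c : ℝ≥0∞) (f : α → β → ℝ≥0∞) :
    ∑' a, ∑' b, c * f a b = c * ∑' a, ∑' b, f a b := by
  rw [← ENNReal.tsum_mul_left]
  exact tsum_congr fun a => ENNReal.tsum_mul_left

lemma costAt_zero (q : S → C → S → ℝ≥0∞) (π : Policy S C) (x₀ : S) (f : S → C → ℝ≥0∞) :
    costAt q π x₀ 0 f = ∑' u : C, π [] x₀ u * f x₀ u := by
  rw [costAt]
  calc (∑' y : S, ∑' u : C, saDist q π x₀ 0 y u * f y u)
      = ∑' y : S, (if y = x₀ then 1 else 0) * ∑' u : C, π [] y u * f y u := by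
        refine tsum_congr fun y => ?_
        rw [tsum_congr (fun u => by rw [saDist_zero]; ring :
          ∀ u : C, saDist q π x₀ 0 y u * f y u
            = (if y = x₀ then 1 else 0) * (π [] y u * f y u)),
          ENNReal.tsum_mul_left]
    _ = ∑' u : C, π [] x₀ u * f x₀ u := tsum_ind x₀ _

lemma costAt_succ (q : S → C → S → ℝ≥0∞) (π : Policy S C) (x₀ : S) (n : ℕ)
    (f : S → C → ℝ≥0∞) :
    costAt q π x₀ (n + 1) f =
      ∑' u₀ : C, π [] x₀ u₀ *
        ∑' x₁ : S, q x₀ u₀ x₁ * costAt q (shiftPol π (x₀, u₀)) x₁ n f := by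
  rw [costAt]
  calc (∑' y : S, ∑' u : C, saDist q π x₀ (n + 1) y u * f y u)
      = ∑' y : S, ∑' u : C, ∑' u₀ : C, ∑' x₁ : S,
          (π [] x₀ u₀ * q x₀ u₀ x₁) *
            (saDist q (shiftPol π (x₀, u₀)) x₁ n y u * f y u) := by
        refine tsum_congr fun y => tsum_congr fun u => ?_
        rw [saDist_succ, ← ENNReal.tsum_mul_right]
        refine tsum_congr fun u₀ => ?_
        rw [show (π [] x₀ u₀ * ∑' x₁ : S, q x₀ u₀ x₁ * saDist q (shiftPol π (x₀, u₀)) x₁ n y u)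
              * f y u
            = (π [] x₀ u₀ * f y u) *
              ∑' x₁ : S, q x₀ u₀ x₁ * saDist q (shiftPol π (x₀, u₀)) x₁ n y u from by ring,
          ← ENNReal.tsum_mul_left]
        exact tsum_congr fun x₁ => by ring
    _ = ∑' u₀ : C, ∑' x₁ : S, ∑' y : S, ∑' u : C,
          (π [] x₀ u₀ * q x₀ u₀ x₁) *
            (saDist q (shiftPol π (x₀, u₀)) x₁ n y u * f y u) :=
        tsum_swap_pairs _
    _ = ∑' u₀ : C, π [] x₀ u₀ *
          ∑' x₁ : S, q x₀ u₀ x₁ * costAt q (shiftPol π (x₀, u₀)) x₁ n f := by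
        refine tsum_congr fun u₀ => ?_
        rw [tsum_congr (fun x₁ => by rw [pull2] :
          ∀ x₁ : S, (∑' y : S, ∑' u : C, (π [] x₀ u₀ * q x₀ u₀ x₁) *
              (saDist q (shiftPol π (x₀, u₀)) x₁ n y u * f y u))
            = (π [] x₀ u₀ * q x₀ u₀ x₁) *
              ∑' y : S, ∑' u : C, saDist q (shiftPol π (x₀, u₀)) x₁ n y u * f y u),
          tsum_congr (fun x₁ => mul_assoc _ _ _ :
            ∀ x₁ : S, (π [] x₀ u₀ * q x₀ u₀ x₁) *
              (∑' y : S, ∑' u : C, saDist q (shiftPol π (x₀, u₀)) x₁ n y u * f y u)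
            = π [] x₀ u₀ * (q x₀ u₀ x₁ *
              ∑' y : S, ∑' u : C, saDist q (shiftPol π (x₀, u₀)) x₁ n y u * f y u)),
          ENNReal.tsum_mul_left]
        rfl

lemma sDist_mass {U : S → Set C} {q : S → C → S → ℝ≥0∞}
    (hq : ∀ x, ∀ u ∈ U x, (∑' x' : S, q x u x') = 1) :
    ∀ (n : ℕ) (π : Policy S C), IsPolicy U π → ∀ x₀ : S, (∑' y : S, sDist q π x₀ n y) = 1 := by
  intro n
  induction n with
  | zero =>
      intro π hπ x₀
      rw [tsum_congr (fun y => sDist_zero q π x₀ y)]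
      exact tsum_ite_eq x₀ 1
  | succ n ih =>
      intro π hπ x₀
      calc (∑' y : S, sDist q π x₀ (n + 1) y)
          = ∑' y : S, ∑' u₀ : C, ∑' x₁ : S,
              (π [] x₀ u₀ * q x₀ u₀ x₁) * sDist q (shiftPol π (x₀, u₀)) x₁ n y := by
            refine tsum_congr fun y => ?_
            rw [sDist_succ]
            refine tsum_congr fun u₀ => ?_
            rw [show (π [] x₀ u₀ * ∑' x₁ : S, q x₀ u₀ x₁ * sDist q (shiftPol π (x₀, u₀)) x₁ n y)
                = ∑' x₁ : S, (π [] x₀ u₀ * q x₀ u₀ x₁) * sDist q (shiftPol π (x₀, u₀)) x₁ n y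
              from by rw [← ENNReal.tsum_mul_left]; exact tsum_congr fun x₁ => by ring]
        _ = ∑' u₀ : C, ∑' x₁ : S, ∑' y : S,
              (π [] x₀ u₀ * q x₀ u₀ x₁) * sDist q (shiftPol π (x₀, u₀)) x₁ n y :=
            tsum_cycle _
        _ = ∑' u₀ : C, π [] x₀ u₀ * ∑' x₁ : S, q x₀ u₀ x₁ := by
            refine tsum_congr fun u₀ => ?_
            rw [tsum_congr (fun x₁ => by
                rw [ENNReal.tsum_mul_left, ih (shiftPol π (x₀, u₀)) (isPolicy_shiftPol hπ _) x₁,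
                  mul_one] :
              ∀ x₁ : S, (∑' y : S, (π [] x₀ u₀ * q x₀ u₀ x₁) *
                  sDist q (shiftPol π (x₀, u₀)) x₁ n y) = π [] x₀ u₀ * q x₀ u₀ x₁),
              ENNReal.tsum_mul_left]
        _ = ∑' u₀ : C, π [] x₀ u₀ := by
            refine tsum_congr fun u₀ => ?_
            rcases eq_or_ne (π [] x₀ u₀) 0 with h0 | h0
            · rw [h0, zero_mul]
            · rw [hq x₀ u₀ ((hπ [] x₀).2 u₀ h0), mul_one]
        _ = 1 := (hπ [] x₀).1

/-- The discounted expected cost functional for a nonnegative stage cost. -/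
def JD (β : ℝ) (q : S → C → S → ℝ≥0∞) (f : S → C → ℝ≥0∞) (π : Policy S C) (x : S) : ℝ≥0∞ :=
  ∑' n : ℕ, ENNReal.ofReal β ^ n * costAt q π x n f

lemma JplusD_eq_JD (β : ℝ) (q : S → C → S → ℝ≥0∞) (g : S → C → EReal) (π : Policy S C)
    (x : S) : JplusD β q g π x = JD β q (gPos g) π x := rfl

lemma JminusD_eq_JD (β : ℝ) (q : S → C → S → ℝ≥0∞) (g : S → C → EReal) (π : Policy S C)
    (x : S) : JminusD β q g π x = JD β q (gNeg g) π x := rfl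

lemma JD_decomp (β : ℝ) (q : S → C → S → ℝ≥0∞) (f : S → C → ℝ≥0∞) (π : Policy S C) (x₀ : S) :
    JD β q f π x₀ = ∑' u₀ : C, π [] x₀ u₀ * (f x₀ u₀ +
      ENNReal.ofReal β * ∑' x₁ : S, q x₀ u₀ x₁ * JD β q f (shiftPol π (x₀, u₀)) x₁) := by
  rw [JD, tsum_eq_zero_add' ENNReal.summable, pow_zero, one_mul, costAt_zero]
  have tail : (∑' n : ℕ, ENNReal.ofReal β ^ (n + 1) * costAt q π x₀ (n + 1) f)
      = ∑' u₀ : C, π [] x₀ u₀ * (ENNReal.ofReal β *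
          ∑' x₁ : S, q x₀ u₀ x₁ * JD β q f (shiftPol π (x₀, u₀)) x₁) := by
    calc (∑' n : ℕ, ENNReal.ofReal β ^ (n + 1) * costAt q π x₀ (n + 1) f)
        = ∑' n : ℕ, ∑' u₀ : C, ∑' x₁ : S,
            (π [] x₀ u₀ * (ENNReal.ofReal β * q x₀ u₀ x₁)) *
              (ENNReal.ofReal β ^ n * costAt q (shiftPol π (x₀, u₀)) x₁ n f) := by
          refine tsum_congr fun n => ?_
          rw [costAt_succ, ← ENNReal.tsum_mul_left]
          refine tsum_congr fun u₀ => ?_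
          rw [show ENNReal.ofReal β ^ (n + 1) * (π [] x₀ u₀ *
              ∑' x₁ : S, q x₀ u₀ x₁ * costAt q (shiftPol π (x₀, u₀)) x₁ n f)
            = (ENNReal.ofReal β ^ (n + 1) * π [] x₀ u₀) *
              ∑' x₁ : S, q x₀ u₀ x₁ * costAt q (shiftPol π (x₀, u₀)) x₁ n f from by ring,
            ← ENNReal.tsum_mul_left]
          exact tsum_congr fun x₁ => by rw [pow_succ]; ring
      _ = ∑' u₀ : C, ∑' x₁ : S, ∑' n : ℕ,
            (π [] x₀ u₀ * (ENNReal.ofReal β * q x₀ u₀ x₁)) *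
              (ENNReal.ofReal β ^ n * costAt q (shiftPol π (x₀, u₀)) x₁ n f) :=
          tsum_cycle _
      _ = ∑' u₀ : C, π [] x₀ u₀ * (ENNReal.ofReal β *
            ∑' x₁ : S, q x₀ u₀ x₁ * JD β q f (shiftPol π (x₀, u₀)) x₁) := by
          refine tsum_congr fun u₀ => ?_
          rw [tsum_congr (fun x₁ => by
              rw [ENNReal.tsum_mul_left, mul_assoc, mul_assoc, JD] :
            ∀ x₁ : S, (∑' n : ℕ, (π [] x₀ u₀ * (ENNReal.ofReal β * q x₀ u₀ x₁)) *
                (ENNReal.ofReal β ^ n * costAt q (shiftPol π (x₀, u₀)) x₁ n f))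
              = π [] x₀ u₀ * (ENNReal.ofReal β *
                  (q x₀ u₀ x₁ * JD β q f (shiftPol π (x₀, u₀)) x₁))),
            ENNReal.tsum_mul_left]
          refine congrArg _ ?_
          rw [ENNReal.tsum_mul_left]
  rw [tail, ← ENNReal.tsum_add]
  exact tsum_congr fun u₀ => (mul_add _ _ _).symm

end CostRec



/-! ### Bellman inequality for the discounted optimal cost -/

section Bellman

variable {S C : Type}

lemma JminusD_ne_top {β : ℝ} {U : S → Set C} {q : S → C → S → ℝ≥0∞} {g : S → C → EReal}
    (hGC : GCD β U q g) {π : Policy S C} (hπ : IsPolicy U π) (x : S) :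
    JminusD β q g π x ≠ ⊤ := by
  intro ht
  refine hGC x (top_le_iff.1 ?_)
  calc (⊤ : ℝ≥0∞) = JminusD β q g π x := ht.symm
    _ ≤ ⨆ π' ∈ {π' : Policy S C | IsPolicy U π'}, JminusD β q g π' x :=
        le_biSup (fun π' => JminusD β q g π' x) hπ

lemma mixture {ι : Type} (w A C : ι → ℝ≥0∞) (hw : (∑' i, w i) = 1)
    (hC : (∑' i, w i * C i) ≠ ⊤) (L : EReal)
    (h : ∀ i, w i ≠ 0 → L ≤ (A i : EReal) - (C i : EReal)) :
    L ≤ ((∑' i, w i * A i : ℝ≥0∞) : EReal) - ((∑' i, w i * C i : ℝ≥0∞) : EReal) := by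
  refine (key2 hC L).2 ?_
  calc ePos L + ∑' i, w i * C i = ∑' i, w i * (ePos L + C i) := by
        rw [tsum_congr (fun i => mul_add (w i) (ePos L) (C i)), ENNReal.tsum_add,
          ENNReal.tsum_mul_right, hw, one_mul]
    _ ≤ ∑' i, w i * (A i + ePos (-L)) := by
        refine ENNReal.tsum_le_tsum fun i => ?_
        rcases eq_or_ne (w i) 0 with h0 | h0
        · rw [h0, zero_mul, zero_mul]
        · have hCi : C i ≠ ⊤ := by
            intro hCi
            have hci' : w i * C i = ⊤ := by rw [hCi, ENNReal.mul_top h0]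
            exact hC (top_le_iff.1 (hci' ▸ ENNReal.le_tsum i))
          exact mul_le_mul_right ((key2 hCi L).1 (h i h0)) _
    _ = (∑' i, w i * A i) + ePos (-L) := by
        rw [tsum_congr (fun i => mul_add (w i) (A i) (ePos (-L))), ENNReal.tsum_add,
          ENNReal.tsum_mul_right, hw, one_mul]

lemma pointwise_PN {Pσ Nσ : ℝ≥0∞} (hN : Nσ ≠ ⊤) {L : EReal} (hL0 : 0 ≤ L)
    (h : L ≤ (Pσ : EReal) - (Nσ : EReal)) : ePos L + Nσ ≤ Pσ := by
  have h2 := (key2 hN L).1 h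
  have h3 : ePos (-L) = 0 := ePos_nonpos (EReal.neg_le.mpr (by simpa using hL0))
  rwa [h3, add_zero] at h2

lemma bellman_le [Countable S] [Countable C] (β : ℝ) (hβ0 : 0 ≤ β)
    (U : S → Set C) (q : S → C → S → ℝ≥0∞) (g : S → C → EReal)
    (hg : ∀ x, ∀ u ∈ U x, g x u ≠ ⊥) (hGC : GCD β U q g)
    (hpos : ∀ x : S, 0 ≤ JstarD β U q g x) (x : S) :
    TopD β U q g (JstarD β U q g) x ≤ JstarD β U q g x := by
  rw [JstarD]
  refine le_iInf₂ fun π hπ => ?_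
  set L := TopD β U q g (JstarD β U q g) x with hL
  -- one-step decomposition of the policy cost
  set A : C → ℝ≥0∞ := fun u₀ => gPos g x u₀ + ENNReal.ofReal β *
    ∑' x₁ : S, q x u₀ x₁ * JplusD β q g (shiftPol π (x, u₀)) x₁ with hA
  set Cc : C → ℝ≥0∞ := fun u₀ => gNeg g x u₀ + ENNReal.ofReal β *
    ∑' x₁ : S, q x u₀ x₁ * JminusD β q g (shiftPol π (x, u₀)) x₁ with hCc
  have hdecP : JplusD β q g π x = ∑' u₀ : C, π [] x u₀ * A u₀ := by
    rw [JplusD_eq_JD, JD_decomp]; rfl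
  have hdecN : JminusD β q g π x = ∑' u₀ : C, π [] x u₀ * Cc u₀ := by
    rw [JminusD_eq_JD, JD_decomp]; rfl
  have hNfin : (∑' u₀ : C, π [] x u₀ * Cc u₀) ≠ ⊤ := by
    rw [← hdecN]; exact JminusD_ne_top hGC hπ x
  have hJpol : JpolD β q g π x = ((∑' u₀ : C, π [] x u₀ * A u₀ : ℝ≥0∞) : EReal)
      - ((∑' u₀ : C, π [] x u₀ * Cc u₀ : ℝ≥0∞) : EReal) := by
    rw [JpolD, hdecP, hdecN, signedSum_of_ne_top hNfin]
  rw [hJpol]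
  refine mixture _ _ _ (hπ [] x).1 hNfin L fun u₀ h0 => ?_
  have hu₀ : u₀ ∈ U x := (hπ [] x).2 u₀ h0
  have hCfin : Cc u₀ ≠ ⊤ := by
    intro hCi
    have hci' : π [] x u₀ * Cc u₀ = ⊤ := by rw [hCi, ENNReal.mul_top h0]
    exact hNfin (top_le_iff.1 (hci' ▸ ENNReal.le_tsum u₀))
  -- compare with the DP operator value at u₀
  have hterm : L ≤ signedSum
      (ePos (g x u₀) + ENNReal.ofReal β *
        ∑' x₁ : S, q x u₀ x₁ * ePos (JstarD β U q g x₁))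
      (ePos (-(g x u₀)) + ENNReal.ofReal β *
        ∑' x₁ : S, q x u₀ x₁ * ePos (-(JstarD β U q g x₁))) := by
    rw [hL, TopD]
    exact iInf₂_le u₀ hu₀
  have hzero : ∀ x₁ : S, ePos (-(JstarD β U q g x₁)) = 0 := fun x₁ =>
    ePos_nonpos (EReal.neg_le.mpr (by simpa using hpos x₁))
  have hterm2 : L ≤ (↑(ePos (g x u₀) + ENNReal.ofReal β *
      ∑' x₁ : S, q x u₀ x₁ * ePos (JstarD β U q g x₁)) : EReal)
        - (↑(gNeg g x u₀) : ℝ≥0∞) := by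
    have he : (∑' x₁ : S, q x u₀ x₁ * ePos (-(JstarD β U q g x₁))) = 0 := by
      rw [tsum_congr (fun x₁ => by rw [hzero x₁, mul_zero])]
      exact tsum_zero
    rw [show signedSum
        (ePos (g x u₀) + ENNReal.ofReal β *
          ∑' x₁ : S, q x u₀ x₁ * ePos (JstarD β U q g x₁))
        (ePos (-(g x u₀)) + ENNReal.ofReal β *
          ∑' x₁ : S, q x u₀ x₁ * ePos (-(JstarD β U q g x₁)))
      = signedSum (ePos (g x u₀) + ENNReal.ofReal β *
          ∑' x₁ : S, q x u₀ x₁ * ePos (JstarD β U q g x₁)) (gNeg g x u₀) from by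
        rw [he, mul_zero, add_zero]; rfl] at hterm
    have hgNfin : gNeg g x u₀ ≠ ⊤ := by
      rw [gNeg, ne_eq, ePos_eq_top_iff]
      simp only [EReal.neg_eq_top_iff]
      exact hg x u₀ hu₀
    rwa [signedSum_of_ne_top hgNfin] at hterm
  refine le_trans hterm2 (ennreal_sub_le_sub ?_ hCfin ?_)
  · -- B + Cc u₀ ≤ A u₀ + gNeg
    have hptw : ∀ x₁ : S, ePos (JstarD β U q g x₁) + JminusD β q g (shiftPol π (x, u₀)) x₁
        ≤ JplusD β q g (shiftPol π (x, u₀)) x₁ := by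
      intro x₁
      have hNσ : JminusD β q g (shiftPol π (x, u₀)) x₁ ≠ ⊤ :=
        JminusD_ne_top hGC (isPolicy_shiftPol hπ _) x₁
      refine pointwise_PN hNσ (hpos x₁) ?_
      have h1 : JstarD β U q g x₁ ≤ JpolD β q g (shiftPol π (x, u₀)) x₁ :=
        iInf₂_le _ (isPolicy_shiftPol hπ _)
      rwa [JpolD, signedSum_of_ne_top hNσ] at h1
    have hsum : (∑' x₁ : S, q x u₀ x₁ * ePos (JstarD β U q g x₁))
        + (∑' x₁ : S, q x u₀ x₁ * JminusD β q g (shiftPol π (x, u₀)) x₁)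
        ≤ ∑' x₁ : S, q x u₀ x₁ * JplusD β q g (shiftPol π (x, u₀)) x₁ := by
      rw [← ENNReal.tsum_add, tsum_congr (fun x₁ => (mul_add _ _ _).symm)]
      exact ENNReal.tsum_le_tsum fun x₁ => mul_le_mul_right (hptw x₁) _
    calc (ePos (g x u₀) + ENNReal.ofReal β *
            ∑' x₁ : S, q x u₀ x₁ * ePos (JstarD β U q g x₁)) + Cc u₀
        = (ePos (g x u₀) + gNeg g x u₀) +
            (ENNReal.ofReal β * (∑' x₁ : S, q x u₀ x₁ * ePos (JstarD β U q g x₁))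
              + ENNReal.ofReal β *
                (∑' x₁ : S, q x u₀ x₁ * JminusD β q g (shiftPol π (x, u₀)) x₁)) := by
          rw [hCc]; ring
      _ = (ePos (g x u₀) + gNeg g x u₀) + ENNReal.ofReal β *
            ((∑' x₁ : S, q x u₀ x₁ * ePos (JstarD β U q g x₁))
              + ∑' x₁ : S, q x u₀ x₁ * JminusD β q g (shiftPol π (x, u₀)) x₁) := by
          rw [mul_add]
      _ ≤ (ePos (g x u₀) + gNeg g x u₀) + ENNReal.ofReal β *
            (∑' x₁ : S, q x u₀ x₁ * JplusD β q g (shiftPol π (x, u₀)) x₁) :=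
          add_le_add_right (mul_le_mul_right hsum _) _
      _ = A u₀ + gNeg g x u₀ := by rw [hA]; show _ = gPos g x u₀ + _ + _; rw [gPos]; ring
  · rw [gNeg, ne_eq, ePos_eq_top_iff]
    simp only [EReal.neg_eq_top_iff]
    exact hg x u₀ hu₀

end Bellman



/-! ### Monotonicity, shift, and the upper bound -/

section Upper

variable {S C : Type}

lemma ereal_sub_def (a b : EReal) : a - b = a + (-b) := rfl

lemma signedSum_mono {P P' N N' : ℝ≥0∞} (hP : P ≤ P') (hN : N' ≤ N) :
    signedSum P N ≤ signedSum P' N' := by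
  rw [signedSum, signedSum]
  split_ifs with h1 h2 h2
  · exact le_rfl
  · exact absurd (top_le_iff.1 (h1 ▸ hP)) h2
  · exact le_top
  · exact EReal.sub_le_sub (EReal.coe_ennreal_le_coe_ennreal_iff.2 hP)
      (EReal.coe_ennreal_le_coe_ennreal_iff.2 hN)

lemma TopD_mono (β : ℝ) (U : S → Set C) (q : S → C → S → ℝ≥0∞) (g : S → C → EReal)
    {J K : S → EReal} (h : ∀ y, J y ≤ K y) (x : S) :
    TopD β U q g J x ≤ TopD β U q g K x := by
  rw [TopD, TopD]
  refine iInf_mono fun u => iInf_mono fun hu => signedSum_mono ?_ ?_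
  · exact add_le_add_right (mul_le_mul_right (ENNReal.tsum_le_tsum fun x₁ =>
      mul_le_mul_right (ePos_mono (h x₁)) _) _) _
  · refine add_le_add_right (mul_le_mul_right (ENNReal.tsum_le_tsum fun x₁ =>
      mul_le_mul_right (ePos_mono ?_) _) _) _
    exact EReal.neg_le.mpr (by rw [neg_neg]; exact h x₁)

lemma ePos_add_const {a : EReal} {c : ℝ} (hc : 0 ≤ c) :
    ePos (a + (c : EReal)) ≤ ePos a + ENNReal.ofReal c := by
  induction a with
  | bot =>
      rw [show (⊥ : EReal) + (c : EReal) = ⊥ from EReal.bot_add _, ePos_bot]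
      exact zero_le
  | top =>
      rw [EReal.top_add_coe, ePos_top]
      exact le_top
  | coe r =>
      rw [← EReal.coe_add, ePos_real, ePos_real]
      exact ENNReal.ofReal_add_le

lemma signedSum_le_add_const {P P' N : ℝ≥0∞} (hN : N ≠ ⊤) {d : ℝ} (hd : 0 ≤ d)
    (hP : P' ≤ P + ENNReal.ofReal d) : signedSum P' N ≤ signedSum P N + (d : EReal) := by
  rw [signedSum_of_ne_top hN, signedSum_of_ne_top hN]
  calc (P' : EReal) - (N : EReal) ≤ ((P + ENNReal.ofReal d : ℝ≥0∞) : EReal) - (N : EReal) :=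
        EReal.sub_le_sub (EReal.coe_ennreal_le_coe_ennreal_iff.2 hP) le_rfl
    _ = (P : EReal) - (N : EReal) + (d : EReal) := by
        rw [EReal.coe_ennreal_add, EReal.coe_ennreal_ofReal, max_eq_left hd,
          ereal_sub_def, ereal_sub_def, add_right_comm]

lemma TopD_shift_le [Countable S] [Countable C] (β : ℝ) (hβ0 : 0 ≤ β)
    (U : S → Set C) (q : S → C → S → ℝ≥0∞) (g : S → C → EReal)
    (hU : ∀ x, (U x).Nonempty)
    (hg : ∀ x, ∀ u ∈ U x, g x u ≠ ⊥)
    (hq : ∀ x, ∀ u ∈ U x, (∑' x' : S, q x u x') = 1)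
    (hGC : GCD β U q g)
    (hpos : ∀ x : S, 0 ≤ JstarD β U q g x) (c : ℝ) (hc : 0 ≤ c) (x : S) :
    TopD β U q g (fun y => JstarD β U q g y + (c : EReal)) x
      ≤ JstarD β U q g x + ((β * c : ℝ) : EReal) := by
  have hd0 : 0 ≤ β * c := mul_nonneg hβ0 hc
  have hzeroJ : ∀ x₁ : S, ePos (-(JstarD β U q g x₁)) = 0 := fun x₁ =>
    ePos_nonpos (EReal.neg_le.mpr (by simpa using hpos x₁))
  have hzeroK : ∀ x₁ : S, ePos (-(JstarD β U q g x₁ + (c : EReal))) = 0 := fun x₁ =>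
    ePos_nonpos (EReal.neg_le.mpr (by
      simpa using add_nonneg (hpos x₁) (by exact_mod_cast hc : (0 : EReal) ≤ (c : EReal))))
  have hterm : ∀ u ∈ U x,
      signedSum (ePos (g x u) + ENNReal.ofReal β *
          ∑' x₁ : S, q x u x₁ * ePos (JstarD β U q g x₁ + (c : EReal)))
        (ePos (-(g x u)) + ENNReal.ofReal β *
          ∑' x₁ : S, q x u x₁ * ePos (-(JstarD β U q g x₁ + (c : EReal))))
      ≤ signedSum (ePos (g x u) + ENNReal.ofReal β *
          ∑' x₁ : S, q x u x₁ * ePos (JstarD β U q g x₁))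
        (ePos (-(g x u)) + ENNReal.ofReal β *
          ∑' x₁ : S, q x u x₁ * ePos (-(JstarD β U q g x₁))) + ((β * c : ℝ) : EReal) := by
    intro u hu
    have hNK : (∑' x₁ : S, q x u x₁ * ePos (-(JstarD β U q g x₁ + (c : EReal)))) = 0 := by
      rw [tsum_congr (fun x₁ => by rw [hzeroK x₁, mul_zero])]; exact tsum_zero
    have hNJ : (∑' x₁ : S, q x u x₁ * ePos (-(JstarD β U q g x₁))) = 0 := by
      rw [tsum_congr (fun x₁ => by rw [hzeroJ x₁, mul_zero])]; exact tsum_zero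
    rw [hNK, hNJ, mul_zero, add_zero]
    have hgN : ePos (-(g x u)) ≠ ⊤ := by
      rw [ne_eq, ePos_eq_top_iff]
      simp only [EReal.neg_eq_top_iff]
      exact hg x u hu
    refine signedSum_le_add_const hgN hd0 ?_
    have hsum : (∑' x₁ : S, q x u x₁ * ePos (JstarD β U q g x₁ + (c : EReal)))
        ≤ (∑' x₁ : S, q x u x₁ * ePos (JstarD β U q g x₁)) + ENNReal.ofReal c := by
      calc (∑' x₁ : S, q x u x₁ * ePos (JstarD β U q g x₁ + (c : EReal)))
          ≤ ∑' x₁ : S, (q x u x₁ * ePos (JstarD β U q g x₁) + q x u x₁ * ENNReal.ofReal c) := by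
            refine ENNReal.tsum_le_tsum fun x₁ => ?_
            rw [← mul_add]
            exact mul_le_mul_right (ePos_add_const hc) _
        _ = (∑' x₁ : S, q x u x₁ * ePos (JstarD β U q g x₁)) + ENNReal.ofReal c := by
            rw [ENNReal.tsum_add, ENNReal.tsum_mul_right, hq x u hu, one_mul]
    calc ePos (g x u) + ENNReal.ofReal β *
          ∑' x₁ : S, q x u x₁ * ePos (JstarD β U q g x₁ + (c : EReal))
        ≤ ePos (g x u) + ENNReal.ofReal β *
            ((∑' x₁ : S, q x u x₁ * ePos (JstarD β U q g x₁)) + ENNReal.ofReal c) :=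
          add_le_add_right (mul_le_mul_right hsum _) _
      _ = ePos (g x u) + ENNReal.ofReal β *
            (∑' x₁ : S, q x u x₁ * ePos (JstarD β U q g x₁)) + ENNReal.ofReal (β * c) := by
          rw [mul_add, ENNReal.ofReal_mul hβ0, add_assoc]
  have hne : Nonempty ↥(U x) := (hU x).to_subtype
  calc TopD β U q g (fun y => JstarD β U q g y + (c : EReal)) x
      = ⨅ u : ↥(U x), signedSum (ePos (g x u.1) + ENNReal.ofReal β *
          ∑' x₁ : S, q x u.1 x₁ * ePos (JstarD β U q g x₁ + (c : EReal)))
        (ePos (-(g x u.1)) + ENNReal.ofReal β *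
          ∑' x₁ : S, q x u.1 x₁ * ePos (-(JstarD β U q g x₁ + (c : EReal)))) := by
        rw [TopD, iInf_subtype']
    _ ≤ ⨅ u : ↥(U x), (signedSum (ePos (g x u.1) + ENNReal.ofReal β *
          ∑' x₁ : S, q x u.1 x₁ * ePos (JstarD β U q g x₁))
        (ePos (-(g x u.1)) + ENNReal.ofReal β *
          ∑' x₁ : S, q x u.1 x₁ * ePos (-(JstarD β U q g x₁))) + ((β * c : ℝ) : EReal)) :=
        iInf_mono fun u => hterm u.1 u.2
    _ = (⨅ u : ↥(U x), signedSum (ePos (g x u.1) + ENNReal.ofReal β *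
          ∑' x₁ : S, q x u.1 x₁ * ePos (JstarD β U q g x₁))
        (ePos (-(g x u.1)) + ENNReal.ofReal β *
          ∑' x₁ : S, q x u.1 x₁ * ePos (-(JstarD β U q g x₁)))) + ((β * c : ℝ) : EReal) :=
        ereal_iInf_add _ _
    _ = TopD β U q g (JstarD β U q g) x + ((β * c : ℝ) : EReal) := by
        rw [TopD, iInf_subtype']
    _ ≤ JstarD β U q g x + ((β * c : ℝ) : EReal) :=
        add_le_add_left (bellman_le β hβ0 U q g hg hGC hpos x) _

lemma JstarD_ne_bot {β : ℝ} {U : S → Set C} {q : S → C → S → ℝ≥0∞} {g : S → C → EReal}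
    (hpos : ∀ x : S, 0 ≤ JstarD β U q g x) (x : S) : JstarD β U q g x ≠ ⊥ := by
  intro hb
  have := hpos x
  rw [hb] at this
  simp at this

lemma upper_bound [Countable S] [Countable C] (β : ℝ) (hβ0 : 0 ≤ β) (hβ1 : β < 1)
    (U : S → Set C) (q : S → C → S → ℝ≥0∞) (g : S → C → EReal)
    (hU : ∀ x, (U x).Nonempty)
    (hg : ∀ x, ∀ u ∈ U x, g x u ≠ ⊥)
    (hq : ∀ x, ∀ u ∈ U x, (∑' x' : S, q x u x') = 1)
    (hGC : GCD β U q g)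
    (hpos : ∀ x : S, 0 ≤ JstarD β U q g x)
    (J : S → EReal) (b : ℝ) (hb : 0 ≤ b)
    (hub : ∀ x : S, J x ≤ JstarD β U q g x + (b : EReal))
    (hfix : ∀ x : S, TopD β U q g J x = J x) (x : S) :
    J x ≤ JstarD β U q g x := by
  have hiter : ∀ n : ℕ, ∀ y : S, J y ≤ JstarD β U q g y + ((β ^ n * b : ℝ) : EReal) := by
    intro n
    induction n with
    | zero => intro y; simpa using hub y
    | succ n ih =>
        intro y
        have hc : 0 ≤ β ^ n * b := mul_nonneg (pow_nonneg hβ0 n) hb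
        calc J y = TopD β U q g J y := (hfix y).symm
          _ ≤ TopD β U q g (fun z => JstarD β U q g z + ((β ^ n * b : ℝ) : EReal)) y :=
              TopD_mono β U q g ih y
          _ ≤ JstarD β U q g y + ((β * (β ^ n * b) : ℝ) : EReal) :=
              TopD_shift_le β hβ0 U q g hU hg hq hGC hpos _ hc y
          _ = JstarD β U q g y + ((β ^ (n + 1) * b : ℝ) : EReal) := by
              rw [show β * (β ^ n * b) = β ^ (n + 1) * b from by ring]
  refine ereal_le_of_forall_pos (JstarD_ne_bot hpos x) fun δ hδ => ?_
  obtain ⟨n, hn⟩ : ∃ n : ℕ, β ^ n * b ≤ δ := by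
    rcases eq_or_lt_of_le hb with hb0 | hb0
    · exact ⟨0, by rw [← hb0]; simpa using le_of_lt hδ⟩
    · obtain ⟨n, hn⟩ := exists_pow_lt_of_lt_one (div_pos hδ hb0) hβ1
      refine ⟨n, le_of_lt ?_⟩
      have h2 : β ^ n * b < δ / b * b := mul_lt_mul_of_pos_right hn hb0
      rwa [div_mul_cancel₀ δ (ne_of_gt hb0)] at h2
  exact le_trans (hiter n x) (add_le_add_right (EReal.coe_le_coe_iff.2 hn) _)

end Upper



/-! ### The lower bound -/

section Lower

variable {S C : Type}

lemma lower_bound [Countable S] [Countable C] (β : ℝ) (hβ0 : 0 ≤ β) (hβ1 : β < 1)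
    (U : S → Set C) (q : S → C → S → ℝ≥0∞) (g : S → C → EReal)
    (hU : ∀ x, (U x).Nonempty)
    (hg : ∀ x, ∀ u ∈ U x, g x u ≠ ⊥)
    (hq : ∀ x, ∀ u ∈ U x, (∑' x' : S, q x u x') = 1)
    (hGC : GCD β U q g)
    (J : S → EReal) (b : ℝ) (hb : 0 ≤ b)
    (hlb : ∀ x : S, -(b : EReal) ≤ J x)
    (hfix : ∀ x : S, TopD β U q g J x = J x) (x : S) :
    JstarD β U q g x ≤ J x := by
  have hJnb : ∀ y : S, J y ≠ ⊥ := by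
    intro y hy
    have h1 := hlb y
    rw [hy, le_bot_iff, ← EReal.coe_neg] at h1
    exact EReal.coe_ne_bot _ h1
  have hnegJ : ∀ z : S, ePos (-(J z)) ≤ ENNReal.ofReal b := by
    intro z
    have h1 : -(J z) ≤ ((b : ℝ) : EReal) := EReal.neg_le.mp (hlb z)
    calc ePos (-(J z)) ≤ ePos ((b : ℝ) : EReal) := ePos_mono h1
      _ = ENNReal.ofReal b := ePos_real b
  refine ereal_le_of_forall_pos (hJnb x) fun δ hδ => ?_
  set ε := δ * (1 - β) with hεdef
  have hε0 : 0 < ε := mul_pos hδ (by linarith)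
  have hεδ : ε + β * δ = δ := by rw [hεdef]; ring
  -- choose an ε-optimal stationary selector
  have hchoice : ∀ y : S, ∃ u : C, u ∈ U y ∧
      signedSum (ePos (g y u) + ENNReal.ofReal β * ∑' x₁ : S, q y u x₁ * ePos (J x₁))
        (ePos (-(g y u)) + ENNReal.ofReal β * ∑' x₁ : S, q y u x₁ * ePos (-(J x₁)))
      ≤ J y + (ε : EReal) := by
    intro y
    rcases eq_or_ne (J y) ⊤ with hJy | hJy
    · obtain ⟨u, hu⟩ := hU y
      refine ⟨u, hu, ?_⟩
      rw [hJy, EReal.top_add_coe]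
      exact le_top
    · have hJrepr : J y = ((J y).toReal : EReal) := (EReal.coe_toReal hJy (hJnb y)).symm
      have hlt : TopD β U q g J y < J y + (ε : EReal) := by
        rw [hfix y, hJrepr, ← EReal.coe_add]
        exact EReal.coe_lt_coe_iff.2 (by linarith)
      rw [TopD] at hlt
      rw [iInf_lt_iff] at hlt
      obtain ⟨u, hu⟩ := hlt
      rw [iInf_lt_iff] at hu
      obtain ⟨huU, hval⟩ := hu
      exact ⟨u, huU, le_of_lt hval⟩
  choose μ hμU hμF using hchoice
  set π : Policy S C := fun _ y u => if u = μ y then 1 else 0 with hπdef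
  have hπ : IsPolicy U π := by
    intro h y
    constructor
    · exact tsum_ite_eq (μ y) 1
    · intro u hu0
      by_cases hu : u = μ y
      · rw [hu]; exact hμU y
      · exact absurd (by rw [hπdef]; simp [hu]) hu0
  have hshift : ∀ p : S × C, shiftPol π p = π := fun p => rfl
  have hwcol : ∀ (y : S) (f : C → ℝ≥0∞), (∑' u₀ : C, π [] y u₀ * f u₀) = f (μ y) :=
    fun y f => tsum_ind (μ y) f
  -- stationary recursions
  have hcost0 : ∀ (y : S) (f : S → C → ℝ≥0∞), costAt q π y 0 f = f y (μ y) := by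
    intro y f
    rw [costAt_zero]
    exact hwcol y (fun u => f y u)
  have hcostS : ∀ (y : S) (n : ℕ) (f : S → C → ℝ≥0∞),
      costAt q π y (n + 1) f = ∑' x₁ : S, q y (μ y) x₁ * costAt q π x₁ n f := by
    intro y n f
    rw [costAt_succ]
    rw [tsum_congr (fun u₀ => by rw [hshift (y, u₀)] :
      ∀ u₀ : C, π [] y u₀ * (∑' x₁ : S, q y u₀ x₁ * costAt q (shiftPol π (y, u₀)) x₁ n f)
        = π [] y u₀ * (∑' x₁ : S, q y u₀ x₁ * costAt q π x₁ n f))]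
    exact hwcol y _
  have hsDistS : ∀ (y : S) (n : ℕ) (z : S),
      sDist q π y (n + 1) z = ∑' x₁ : S, q y (μ y) x₁ * sDist q π x₁ n z := by
    intro y n z
    rw [sDist_succ]
    rw [tsum_congr (fun u₀ => by rw [hshift (y, u₀)] :
      ∀ u₀ : C, π [] y u₀ * (∑' x₁ : S, q y u₀ x₁ * sDist q (shiftPol π (y, u₀)) x₁ n z)
        = π [] y u₀ * (∑' x₁ : S, q y u₀ x₁ * sDist q π x₁ n z))]
    exact hwcol y _
  have hmass : ∀ (n : ℕ) (y : S), (∑' z : S, sDist q π y n z) = 1 :=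
    fun n y => sDist_mass hq n π hπ y
  -- partial sums and state expectations
  set βe := ENNReal.ofReal β with hβe
  set SP : ℕ → S → ℝ≥0∞ := fun n y =>
    ∑ k ∈ Finset.range n, βe ^ k * costAt q π y k (gPos g) with hSP
  set SM : ℕ → S → ℝ≥0∞ := fun n y =>
    ∑ k ∈ Finset.range n, βe ^ k * costAt q π y k (gNeg g) with hSM
  set AA : ℕ → S → ℝ≥0∞ := fun n y => ∑' z : S, sDist q π y n z * ePos (J z) with hAA
  set BB : ℕ → S → ℝ≥0∞ := fun n y => ∑' z : S, sDist q π y n z * ePos (-(J z)) with hBB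
  have hBBb : ∀ (n : ℕ) (y : S), BB n y ≤ ENNReal.ofReal b := by
    intro n y
    calc BB n y ≤ ∑' z : S, sDist q π y n z * ENNReal.ofReal b :=
          ENNReal.tsum_le_tsum fun z => mul_le_mul_right (hnegJ z) _
      _ = ENNReal.ofReal b := by rw [ENNReal.tsum_mul_right, hmass n y, one_mul]
  have hSMle : ∀ (n : ℕ) (y : S), SM n y ≤ JminusD β q g π y := fun n y =>
    Summable.sum_le_tsum (Finset.range n) (fun k _ => zero_le) ENNReal.summable
  have hβe1 : βe ≤ 1 := ENNReal.ofReal_le_one.2 hβ1.le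
  have hNN_fin : ∀ (n : ℕ) (y : S), SM n y + βe ^ n * BB n y ≠ ⊤ := by
    intro n y
    have h1 : SM n y ≠ ⊤ :=
      ne_top_of_le_ne_top (JminusD_ne_top hGC hπ y) (hSMle n y)
    have h2 : βe ^ n * BB n y ≤ ENNReal.ofReal b :=
      le_trans (mul_le_mul' (pow_le_one' hβe1 n) (hBBb n y)) (by rw [one_mul])
    intro ht
    rcases ENNReal.add_eq_top.1 ht with h | h
    · exact h1 h
    · exact ENNReal.ofReal_ne_top (top_le_iff.1 (h ▸ h2))
  -- the main induction
  have hD : ∀ (n : ℕ) (y : S),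
      (SP n y + βe ^ n * AA n y) + ePos (-(J y))
        ≤ ePos (J y) + (SM n y + βe ^ n * BB n y) + ENNReal.ofReal δ := by
    intro n
    induction n with
    | zero =>
        intro y
        have hA0 : AA 0 y = ePos (J y) := by
          simp only [hAA]
          rw [tsum_congr (fun z => by rw [sDist_zero] :
            ∀ z : S, sDist q π y 0 z * ePos (J z)
              = (if z = y then 1 else 0) * ePos (J z))]
          exact tsum_ind y _
        have hB0 : BB 0 y = ePos (-(J y)) := by
          simp only [hBB]
          rw [tsum_congr (fun z => by rw [sDist_zero] :
            ∀ z : S, sDist q π y 0 z * ePos (-(J z))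
              = (if z = y then 1 else 0) * ePos (-(J z)))]
          exact tsum_ind y _
        rw [hA0, hB0]
        simp only [hSP, hSM, Finset.sum_range_zero, pow_zero, one_mul, zero_add]
        exact le_self_add
    | succ n ih =>
        intro y
        rcases eq_or_ne (J y) ⊤ with hJy | hJy
        · have hRT : ePos (J y) + (SM (n + 1) y + βe ^ (n + 1) * BB (n + 1) y)
              + ENNReal.ofReal δ = ⊤ := by
            rw [hJy, ePos_top, top_add, top_add]
          rw [hRT]
          exact le_top
        -- recursions for SP, SM, AA, BB
        have hSPrec : ∀ (f : S → C → ℝ≥0∞) (SS : ℕ → S → ℝ≥0∞),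
            (SS = fun n y => ∑ k ∈ Finset.range n, βe ^ k * costAt q π y k f) →
            SS (n + 1) y = f y (μ y) + βe * ∑' x₁ : S, q y (μ y) x₁ * SS n x₁ := by
          intro f SS hSS
          simp only [hSS]
          rw [Finset.sum_range_succ']
          simp only [pow_zero, one_mul]
          rw [hcost0, add_comm]
          congr 1
          calc (∑ k ∈ Finset.range n, βe ^ (k + 1) * costAt q π y (k + 1) f)
              = ∑ k ∈ Finset.range n, ∑' x₁ : S,
                  βe * (q y (μ y) x₁ * (βe ^ k * costAt q π x₁ k f)) := by
                refine Finset.sum_congr rfl fun k _ => ?_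
                rw [hcostS, ← ENNReal.tsum_mul_left]
                refine tsum_congr fun x₁ => ?_
                rw [pow_succ]
                ring
            _ = ∑' x₁ : S, ∑ k ∈ Finset.range n,
                  βe * (q y (μ y) x₁ * (βe ^ k * costAt q π x₁ k f)) :=
                (Summable.tsum_finsetSum (fun k _ => ENNReal.summable)).symm
            _ = βe * ∑' x₁ : S, q y (μ y) x₁ * ∑ k ∈ Finset.range n,
                  βe ^ k * costAt q π x₁ k f := by
                rw [← ENNReal.tsum_mul_left]
                refine tsum_congr fun x₁ => ?_
                rw [Finset.mul_sum, Finset.mul_sum]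
        have hAArec : ∀ (G : S → ℝ≥0∞) (AB : ℕ → S → ℝ≥0∞),
            (AB = fun n y => ∑' z : S, sDist q π y n z * G z) →
            AB (n + 1) y = ∑' x₁ : S, q y (μ y) x₁ * AB n x₁ := by
          intro G AB hAB
          simp only [hAB]
          calc (∑' z : S, sDist q π y (n + 1) z * G z)
              = ∑' z : S, ∑' x₁ : S, q y (μ y) x₁ * (sDist q π x₁ n z * G z) := by
                refine tsum_congr fun z => ?_
                rw [hsDistS, ← ENNReal.tsum_mul_right]
                exact tsum_congr fun x₁ => by ring
            _ = ∑' x₁ : S, ∑' z : S, q y (μ y) x₁ * (sDist q π x₁ n z * G z) :=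
                ENNReal.tsum_comm
            _ = ∑' x₁ : S, q y (μ y) x₁ * ∑' z : S, sDist q π x₁ n z * G z := by
                exact tsum_congr fun x₁ => ENNReal.tsum_mul_left
        have hPP : SP (n + 1) y + βe ^ (n + 1) * AA (n + 1) y
            = gPos g y (μ y) + βe * ∑' x₁ : S,
                q y (μ y) x₁ * (SP n x₁ + βe ^ n * AA n x₁) := by
          rw [hSPrec (gPos g) SP hSP, hAArec (fun z => ePos (J z)) AA hAA]
          rw [show βe ^ (n + 1) * (∑' x₁ : S, q y (μ y) x₁ * AA n x₁)
              = βe * ∑' x₁ : S, q y (μ y) x₁ * (βe ^ n * AA n x₁) from by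
            rw [← ENNReal.tsum_mul_left, ← ENNReal.tsum_mul_left]
            refine tsum_congr fun x₁ => by rw [pow_succ]; ring]
          rw [add_assoc, ← mul_add, ← ENNReal.tsum_add]
          congr 2
          exact tsum_congr fun x₁ => by rw [mul_add]
        have hNN : SM (n + 1) y + βe ^ (n + 1) * BB (n + 1) y
            = gNeg g y (μ y) + βe * ∑' x₁ : S,
                q y (μ y) x₁ * (SM n x₁ + βe ^ n * BB n x₁) := by
          rw [hSPrec (gNeg g) SM hSM, hAArec (fun z => ePos (-(J z))) BB hBB]
          rw [show βe ^ (n + 1) * (∑' x₁ : S, q y (μ y) x₁ * BB n x₁)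
              = βe * ∑' x₁ : S, q y (μ y) x₁ * (βe ^ n * BB n x₁) from by
            rw [← ENNReal.tsum_mul_left, ← ENNReal.tsum_mul_left]
            refine tsum_congr fun x₁ => by rw [pow_succ]; ring]
          rw [add_assoc, ← mul_add, ← ENNReal.tsum_add]
          congr 2
          exact tsum_congr fun x₁ => by rw [mul_add]
        -- aggregated induction hypothesis
        set Qa := ∑' x₁ : S, q y (μ y) x₁ * ePos (J x₁) with hQa
        set Qb := ∑' x₁ : S, q y (μ y) x₁ * ePos (-(J x₁)) with hQb
        have hQbb : Qb ≤ ENNReal.ofReal b := by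
          rw [hQb]
          calc (∑' x₁ : S, q y (μ y) x₁ * ePos (-(J x₁)))
              ≤ ∑' x₁ : S, q y (μ y) x₁ * ENNReal.ofReal b :=
                ENNReal.tsum_le_tsum fun x₁ => mul_le_mul_right (hnegJ x₁) _
            _ = ENNReal.ofReal b := by
                rw [ENNReal.tsum_mul_right, hq y (μ y) (hμU y), one_mul]
        have hi1 : (∑' x₁ : S, q y (μ y) x₁ * (SP n x₁ + βe ^ n * AA n x₁)) + Qb
            ≤ Qa + (∑' x₁ : S, q y (μ y) x₁ * (SM n x₁ + βe ^ n * BB n x₁))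
              + ENNReal.ofReal δ := by
          have h1 : (∑' x₁ : S, q y (μ y) x₁ *
              ((SP n x₁ + βe ^ n * AA n x₁) + ePos (-(J x₁))))
              ≤ ∑' x₁ : S, q y (μ y) x₁ *
                (ePos (J x₁) + (SM n x₁ + βe ^ n * BB n x₁) + ENNReal.ofReal δ) :=
            ENNReal.tsum_le_tsum fun x₁ => mul_le_mul_right (ih x₁) _
          rw [tsum_congr (fun x₁ => mul_add (q y (μ y) x₁) _ _), ENNReal.tsum_add] at h1
          rw [tsum_congr (fun x₁ => by
              rw [mul_add, mul_add] :
            ∀ x₁ : S, q y (μ y) x₁ *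
                (ePos (J x₁) + (SM n x₁ + βe ^ n * BB n x₁) + ENNReal.ofReal δ)
              = q y (μ y) x₁ * ePos (J x₁)
                + q y (μ y) x₁ * (SM n x₁ + βe ^ n * BB n x₁)
                + q y (μ y) x₁ * ENNReal.ofReal δ), ENNReal.tsum_add, ENNReal.tsum_add,
            ENNReal.tsum_mul_right, hq y (μ y) (hμU y), one_mul] at h1
          exact h1
        -- the fixed-point inequality at y, converted to ℝ≥0∞ form
        have hNf : ePos (-(g y (μ y))) + βe * Qb ≠ ⊤ := by
          have h1 : ePos (-(g y (μ y))) ≠ ⊤ := by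
            rw [ne_eq, ePos_eq_top_iff]
            simp only [EReal.neg_eq_top_iff]
            exact hg y (μ y) (hμU y)
          intro ht
          rcases ENNReal.add_eq_top.1 ht with h | h
          · exact h1 h
          · rcases ENNReal.mul_eq_top.1 h with ⟨_, h2⟩ | ⟨h2, _⟩
            · exact ENNReal.ofReal_ne_top (top_le_iff.1 (h2 ▸ hQbb))
            · exact ENNReal.ofReal_ne_top h2
        have hi2 : (ePos (g y (μ y)) + βe * Qa) + ePos (-(J y))
            ≤ ePos (J y) + (ePos (-(g y (μ y))) + βe * Qb) + ENNReal.ofReal ε := by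
          have h1 := hμF y
          rw [signedSum_of_ne_top hNf] at h1
          rw [show (ε : EReal) = ((ENNReal.ofReal ε : ℝ≥0∞) : EReal) from by
            rw [EReal.coe_ennreal_ofReal, max_eq_left hε0.le]] at h1
          exact (key1 hNf ENNReal.ofReal_ne_top (hJnb y)).1 h1
        -- combine
        have hePfin : ePos (J y) ≠ ⊤ := fun ht => hJy (ePos_eq_top_iff.1 ht)
        have hQaQbfin : βe * Qa + βe * Qb ≠ ⊤ := by
          have hrhs : ePos (J y) + (ePos (-(g y (μ y))) + βe * Qb) + ENNReal.ofReal ε ≠ ⊤ := by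
            intro ht
            rcases ENNReal.add_eq_top.1 ht with h | h
            · rcases ENNReal.add_eq_top.1 h with h' | h'
              · exact hePfin h'
              · exact hNf h'
            · exact ENNReal.ofReal_ne_top h
          have hQafin : βe * Qa ≠ ⊤ := by
            intro ht
            apply hrhs
            rw [eq_top_iff]
            calc (⊤ : ℝ≥0∞) = (ePos (g y (μ y)) + βe * Qa) + ePos (-(J y)) := by
                  rw [ht]
                  rw [show ePos (g y (μ y)) + ⊤ = ⊤ from add_top _, top_add]
              _ ≤ _ := hi2
          have hQbfin : βe * Qb ≠ ⊤ := fun ht => hNf (by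
            rw [ENNReal.add_eq_top]; exact Or.inr ht)
          rw [ne_eq, ENNReal.add_eq_top]
          tauto
        rw [hPP, hNN]
        have hkey : ((gPos g y (μ y) + βe * ∑' x₁ : S,
              q y (μ y) x₁ * (SP n x₁ + βe ^ n * AA n x₁)) + ePos (-(J y)))
              + (βe * Qa + βe * Qb)
            ≤ (ePos (J y) + (gNeg g y (μ y) + βe * ∑' x₁ : S,
                q y (μ y) x₁ * (SM n x₁ + βe ^ n * BB n x₁)) + ENNReal.ofReal δ)
              + (βe * Qa + βe * Qb) := by
          have hi1' : βe * ((∑' x₁ : S, q y (μ y) x₁ * (SP n x₁ + βe ^ n * AA n x₁)) + Qb)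
              ≤ βe * (Qa + (∑' x₁ : S, q y (μ y) x₁ * (SM n x₁ + βe ^ n * BB n x₁))
                + ENNReal.ofReal δ) := mul_le_mul_right hi1 _
          have hsum := add_le_add hi2 hi1'
          calc ((gPos g y (μ y) + βe * ∑' x₁ : S,
                q y (μ y) x₁ * (SP n x₁ + βe ^ n * AA n x₁)) + ePos (-(J y)))
                + (βe * Qa + βe * Qb)
              = ((ePos (g y (μ y)) + βe * Qa) + ePos (-(J y)))
                + βe * ((∑' x₁ : S, q y (μ y) x₁ * (SP n x₁ + βe ^ n * AA n x₁)) + Qb) := by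
                rw [gPos]; ring
            _ ≤ (ePos (J y) + (ePos (-(g y (μ y))) + βe * Qb) + ENNReal.ofReal ε)
                + βe * (Qa + (∑' x₁ : S, q y (μ y) x₁ * (SM n x₁ + βe ^ n * BB n x₁))
                  + ENNReal.ofReal δ) := hsum
            _ = ((ePos (J y) + ((ePos (-(g y (μ y)))) + βe * ∑' x₁ : S,
                q y (μ y) x₁ * (SM n x₁ + βe ^ n * BB n x₁))
                  + (ENNReal.ofReal ε + βe * ENNReal.ofReal δ)))
                + (βe * Qa + βe * Qb) := by ring
            _ = (ePos (J y) + (gNeg g y (μ y) + βe * ∑' x₁ : S,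
                q y (μ y) x₁ * (SM n x₁ + βe ^ n * BB n x₁)) + ENNReal.ofReal δ)
              + (βe * Qa + βe * Qb) := by
                rw [hβe, ← ENNReal.ofReal_mul hβ0,
                  ← ENNReal.ofReal_add hε0.le (mul_nonneg hβ0 hδ.le), hεδ, gNeg]
        exact (ENNReal.add_le_add_iff_right hQaQbfin).1 hkey
  -- pass to the limit
  have hJpol : JstarD β U q g x ≤ JpolD β q g π x := iInf₂_le π hπ
  refine le_trans hJpol ?_
  have hNtop : JminusD β q g π x ≠ ⊤ := JminusD_ne_top hGC hπ x
  rcases eq_or_ne (J x) ⊤ with hJx | hJx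
  · rw [hJx, EReal.top_add_coe]
    exact le_top
  have hPinf : JplusD β q g π x = ⨆ n : ℕ, SP n x := by
    rw [JplusD, hSP]
    exact ENNReal.tsum_eq_iSup_nat
  have hgoal : JplusD β q g π x + ePos (-(J x))
      ≤ ePos (J x) + JminusD β q g π x + ENNReal.ofReal δ := by
    have hRfin : ePos (J x) + JminusD β q g π x + ENNReal.ofReal δ ≠ ⊤ := by
      intro ht
      rcases ENNReal.add_eq_top.1 ht with h | h
      · rcases ENNReal.add_eq_top.1 h with h' | h'
        · exact (fun ht2 => hJx (ePos_eq_top_iff.1 ht2)) h'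
        · exact hNtop h'
      · exact ENNReal.ofReal_ne_top h
    refine ENNReal.le_of_forall_pos_le_add fun η hη hlt => ?_
    obtain ⟨m, hm⟩ : ∃ m : ℕ, ENNReal.ofReal (β ^ m * b) ≤ (η : ℝ≥0∞) := by
      rcases eq_or_lt_of_le hb with hb0 | hb0
      · exact ⟨0, by rw [← hb0, mul_zero, ENNReal.ofReal_zero]; exact zero_le⟩
      · have hη' : (0 : ℝ) < η / b := div_pos (by exact_mod_cast hη) hb0
        obtain ⟨m, hm⟩ := exists_pow_lt_of_lt_one hη' hβ1
        refine ⟨m, ?_⟩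
        have h2 : β ^ m * b ≤ (η : ℝ) := by
          have h3 : β ^ m * b < η / b * b := mul_lt_mul_of_pos_right hm hb0
          rw [div_mul_cancel₀ (η : ℝ) (ne_of_gt hb0)] at h3
          exact h3.le
        calc ENNReal.ofReal (β ^ m * b) ≤ ENNReal.ofReal (η : ℝ) :=
              ENNReal.ofReal_le_ofReal h2
          _ = (η : ℝ≥0∞) := ENNReal.ofReal_coe_nnreal
    have hstep : ∀ n : ℕ, SP n x + ePos (-(J x))
        ≤ ePos (J x) + JminusD β q g π x + ENNReal.ofReal δ + η := by
      intro n
      have hmono : SP n x ≤ SP (n + m) x := by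
        rw [hSP]
        exact Finset.sum_le_sum_of_subset
          (Finset.range_subset_range.2 (Nat.le_add_right n m))
      have htail : βe ^ (n + m) * BB (n + m) x ≤ ENNReal.ofReal (β ^ m * b) := by
        calc βe ^ (n + m) * BB (n + m) x ≤ βe ^ (n + m) * ENNReal.ofReal b :=
              mul_le_mul_right (hBBb _ _) _
          _ ≤ βe ^ m * ENNReal.ofReal b := by
              refine mul_le_mul_left ?_ _
              rw [pow_add]
              calc βe ^ n * βe ^ m ≤ 1 * βe ^ m :=
                    mul_le_mul_left (pow_le_one' hβe1 n) _
                _ = βe ^ m := one_mul _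
          _ = ENNReal.ofReal (β ^ m * b) := by
              rw [hβe, ← ENNReal.ofReal_pow hβ0, ← ENNReal.ofReal_mul (pow_nonneg hβ0 m)]
      calc SP n x + ePos (-(J x)) ≤ (SP (n + m) x + βe ^ (n + m) * AA (n + m) x)
            + ePos (-(J x)) := add_le_add_left (le_trans hmono le_self_add) _
        _ ≤ ePos (J x) + (SM (n + m) x + βe ^ (n + m) * BB (n + m) x)
            + ENNReal.ofReal δ := hD (n + m) x
        _ ≤ ePos (J x) + (JminusD β q g π x + ENNReal.ofReal (β ^ m * b))
            + ENNReal.ofReal δ :=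
          add_le_add_left (add_le_add_right (add_le_add (hSMle _ _) htail) _) _
        _ ≤ ePos (J x) + JminusD β q g π x + ENNReal.ofReal δ + η := by
          calc ePos (J x) + (JminusD β q g π x + ENNReal.ofReal (β ^ m * b))
              + ENNReal.ofReal δ
              ≤ ePos (J x) + (JminusD β q g π x + η) + ENNReal.ofReal δ :=
                add_le_add_left (add_le_add_right (add_le_add_right hm _) _) _
            _ = ePos (J x) + JminusD β q g π x + ENNReal.ofReal δ + η := by ring
    rw [hPinf, ENNReal.iSup_add]
    exact iSup_le hstep
  have hfin : (JplusD β q g π x : EReal) - (JminusD β q g π x : EReal)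
      ≤ J x + ((ENNReal.ofReal δ : ℝ≥0∞) : EReal) :=
    (key1 hNtop ENNReal.ofReal_ne_top (hJnb x)).2 hgoal
  rw [JpolD, signedSum_of_ne_top hNtop]
  rw [show ((ENNReal.ofReal δ : ℝ≥0∞) : EReal) = (δ : EReal) from by
    rw [EReal.coe_ennreal_ofReal, max_eq_left hδ.le]] at hfin
  exact hfin

end Lower


/-- UD model: if `J* ≥ 0`, then `J*` is the unique fixed
point of `T` among functions `J` with `-b ≤ J ≤ J* + b` for some `b ≥ 0`. -/
theorem discounted_unique_fixed_point {S C : Type} [Countable S] [Countable C]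
    (U : S → Set C) (q : S → C → S → ℝ≥0∞) (g : S → C → EReal)
    (β : ℝ) (hβ0 : 0 ≤ β) (hβ1 : β < 1)
    (hU : ∀ x, (U x).Nonempty)
    (hg : ∀ x, ∀ u ∈ U x, g x u ≠ ⊥)
    (hq : ∀ x, ∀ u ∈ U x, (∑' x' : S, q x u x') = 1)
    (hGC : GCD β U q g)
    (hpos : ∀ x : S, 0 ≤ JstarD β U q g x)
    (J : S → EReal) (b : ℝ) (hb : 0 ≤ b)
    (hlb : ∀ x : S, -(b : EReal) ≤ J x)
    (hub : ∀ x : S, J x ≤ JstarD β U q g x + (b : EReal))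
    (hfix : ∀ x : S, TopD β U q g J x = J x) :
    J = JstarD β U q g := by
  funext x
  exact le_antisymm (upper_bound β hβ0 hβ1 U q g hU hg hq hGC hpos J b hb hub hfix x)
    (lower_bound β hβ0 hβ1 U q g hU hg hq hGC J b hb hlb hfix x)

end GCMDP

end
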